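/- arXiv:2505.12713 — 6 statements merged into one kernel-verified Lean document; each statement's English description precedes it below -/
import Mathlib

section
/- If a matrix H ∈ ℝ_+^{n×r} with r ≥ 2 satisfies the sufficiently scattered condition SSC1, then H has full column rank r. -/
open Matrix

noncomputable def l2 {r : Type*} [Fintype r] (x : r → ℝ) : ℝ :=
  Real.sqrt (∑ i, x i ^ 2)

def coneRows {n r : Type*} [Fintype n] [Fintype r]
    (H : Matrix n r ℝ) : Set (r → ℝ) :=
  {x | ∃ y : n → ℝ, (∀ i, 0 ≤ y i) ∧ x = Hᵀ *ᵥ y}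

def SSC1 {n r : Type*} [Fintype n] [Fintype r] (H : Matrix n r ℝ) : Prop :=
  {x : r → ℝ | (∀ i, 0 ≤ x i) ∧
      Real.sqrt ((Fintype.card r : ℝ) - 1) * l2 x ≤ ∑ i, x i} ⊆ coneRows H

/-- A nonnegative matrix `H ∈ ℝ₊^{n×r}` with `r ≥ 2` satisfying SSC1 has full
column rank `r`. -/
theorem SSC1_full_column_rank {n r : ℕ} (H : Matrix (Fin n) (Fin r) ℝ)
    (hr : 2 ≤ r) (hH : ∀ i j, 0 ≤ H i j) (hssc1 : SSC1 H) :
    H.rank = r := by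
  have hr1 : (1:ℝ) ≤ (r:ℝ) := by exact_mod_cast le_trans (by norm_num) hr
  set R := LinearMap.range (Hᵀ.mulVecLin) with hR
  -- members of coneRows are in the range
  have hcone : coneRows H ⊆ (R : Set (Fin r → ℝ)) := by
    rintro x ⟨y, -, rfl⟩
    exact ⟨y, rfl⟩
  -- all-ones vector is in the SOC
  have hcard : (Fintype.card (Fin r) : ℝ) = (r : ℝ) := by simp
  have he : (fun _ : Fin r => (1:ℝ)) ∈ R := by
    apply hcone; apply hssc1
    constructor
    · intro i; norm_num
    · rw [hcard]
      have hl2 : l2 (fun _ : Fin r => (1:ℝ)) = Real.sqrt r := by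
        simp [l2]
      rw [hl2, ← Real.sqrt_mul (by linarith)]
      simp only [Finset.sum_const, Finset.card_univ, Fintype.card_fin, nsmul_eq_mul, mul_one]
      calc Real.sqrt (((r:ℝ)-1) * r) ≤ Real.sqrt ((r:ℝ)*r) := by
              apply Real.sqrt_le_sqrt; nlinarith
        _ = r := Real.sqrt_mul_self (by linarith)
  -- e + e_j in the SOC
  have hej : ∀ j : Fin r, ((fun _ => (1:ℝ)) + Pi.single j 1 : Fin r → ℝ) ∈ R := by
    intro j
    set x : Fin r → ℝ := (fun _ => (1:ℝ)) + Pi.single j 1 with hx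
    apply hcone; apply hssc1
    have hsum : ∑ i, x i = (r:ℝ) + 1 := by
      simp [hx, Finset.sum_add_distrib, Finset.sum_pi_single]
    have hsq : ∑ i, x i ^ 2 = (r:ℝ) + 3 := by
      have : ∀ i : Fin r, x i ^ 2
          = 1 + (if i = j then (3:ℝ) else 0) := by
        intro i
        by_cases h : i = j <;> simp [hx, h, Pi.single_apply] <;> norm_num
      rw [Finset.sum_congr rfl (fun i _ => this i)]
      simp [Finset.sum_add_distrib]
    constructor
    · intro i
      have : (0:ℝ) ≤ (Pi.single j 1 : Fin r → ℝ) i := by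
        rcases eq_or_ne i j with h | h <;> simp [h, Pi.single_apply]
      have h1 : x i = 1 + (Pi.single j 1 : Fin r → ℝ) i := rfl
      rw [h1]; linarith
    · rw [hcard, hsum]
      have hl2 : l2 x = Real.sqrt ((r:ℝ)+3) := by
        rw [l2, hsq]
      rw [hl2, ← Real.sqrt_mul (by linarith)]
      calc Real.sqrt (((r:ℝ)-1) * ((r:ℝ)+3)) ≤ Real.sqrt (((r:ℝ)+1)*((r:ℝ)+1)) := by
              apply Real.sqrt_le_sqrt; nlinarith
        _ = (r:ℝ) + 1 := Real.sqrt_mul_self (by linarith)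
  -- standard basis vectors in R
  have hsingle : ∀ j : Fin r, (Pi.single j 1 : Fin r → ℝ) ∈ R := by
    intro j
    have := R.sub_mem (hej j) he
    simpa using this
  have htop : R = ⊤ := by
    rw [eq_top_iff]
    intro v _
    have hv : v = ∑ j, v j • (Pi.single j 1 : Fin r → ℝ) := by
      funext i
      simp [Finset.sum_apply, Pi.single_apply, Finset.sum_ite_eq', mul_comm]
    rw [hv]
    exact R.sum_mem fun j _ => R.smul_mem _ (hsingle j)
  have : Hᵀ.rank = r := by
    rw [Matrix.rank, ← hR, htop]
    simp
  rw [← Matrix.rank_transpose]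
  exact this
end

section
/- Let A ∈ ℝ^{r×r} satisfy A^T e = e and suppose every column of A lies in the cone C* = {x ∈ ℝ^r : e^T x ≥ ‖x‖₂}. Then |det(A)| ≤ 1. -/
open Matrix

lemma trace_eq_sum_eigs {n : ℕ} {M : Matrix (Fin n) (Fin n) ℝ}
    (hM : M.IsHermitian) : M.trace = ∑ i, hM.eigenvalues i := by
  simpa using hM.trace_eq_sum_eigenvalues

/-- If `Aᵀ e = e` (columns of `A` sum to one) and every column of `A` lies in
`C* = {x : eᵀx ≥ ‖x‖₂}`, then `|det A| ≤ 1`. -/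
theorem abs_det_le_one_of_columns_in_dual_cone {r : ℕ}
    (A : Matrix (Fin r) (Fin r) ℝ)
    (hAe : ∀ j, ∑ i, A i j = 1)
    (hcol : ∀ j, l2 (fun i => A i j) ≤ ∑ i, A i j) :
    |A.det| ≤ 1 := by
  rcases Nat.eq_zero_or_pos r with hr | hr
  · subst hr
    simp [Matrix.det_fin_zero]
  -- column norms squared are ≤ 1
  have hcolsq : ∀ j, ∑ i, A i j ^ 2 ≤ 1 := by
    intro j
    have h1 : Real.sqrt (∑ i, A i j ^ 2) ≤ 1 := by
      have := hcol j; rw [hAe j] at this; exact this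
    have hnn : (0:ℝ) ≤ ∑ i, A i j ^ 2 :=
      Finset.sum_nonneg fun i _ => sq_nonneg _
    nlinarith [Real.sq_sqrt hnn, Real.sqrt_nonneg (∑ i, A i j ^ 2)]
  set M := Aᵀ * A with hM
  have hps : M.PosSemidef := by
    simpa [hM, conjTranspose_eq_transpose_of_trivial] using Matrix.posSemidef_conjTranspose_mul_self A
  have hherm := hps.1
  -- trace of M ≤ r
  have htr : M.trace ≤ (r : ℝ) := by
    have : M.trace = ∑ j, ∑ i, A i j ^ 2 := by
      simp [hM, Matrix.trace, Matrix.diag, Matrix.mul_apply, sq]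
    rw [this]
    calc ∑ j, ∑ i, A i j ^ 2 ≤ ∑ _j : Fin r, (1:ℝ) :=
          Finset.sum_le_sum fun j _ => hcolsq j
      _ = (r : ℝ) := by simp
  -- eigenvalues
  have hev : ∀ i, 0 ≤ hherm.eigenvalues i := hps.eigenvalues_nonneg
  have hsum : ∑ i, hherm.eigenvalues i ≤ (r : ℝ) := by
    rw [← trace_eq_sum_eigs hherm]; exact htr
  -- AM-GM: product of eigenvalues ≤ 1
  have hrpos : (0:ℝ) < r := by exact_mod_cast hr
  have hgm : ∏ i, (hherm.eigenvalues i) ^ ((r:ℝ)⁻¹) ≤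
      ∑ i, (r:ℝ)⁻¹ * hherm.eigenvalues i :=
    Real.geom_mean_le_arith_mean_weighted Finset.univ (fun _ => (r:ℝ)⁻¹) hherm.eigenvalues
      (fun _ _ => by positivity) (by simp [Finset.card_univ]; field_simp)
      (fun i _ => hev i)
  have hgm1 : ∏ i, (hherm.eigenvalues i) ^ ((r:ℝ)⁻¹) ≤ 1 := by
    refine hgm.trans ?_
    rw [← Finset.mul_sum]
    rw [inv_mul_le_iff₀ hrpos, mul_one]
    exact hsum
  have hprod : ∏ i, hherm.eigenvalues i ≤ 1 := by
    have hpownn : (0:ℝ) ≤ ∏ i, (hherm.eigenvalues i) ^ ((r:ℝ)⁻¹) :=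
      Finset.prod_nonneg fun i _ => Real.rpow_nonneg (hev i) _
    calc ∏ i, hherm.eigenvalues i
        = ∏ i, ((hherm.eigenvalues i) ^ ((r:ℝ)⁻¹)) ^ r :=
          Finset.prod_congr rfl fun i _ =>
            (Real.rpow_inv_natCast_pow (hev i) hr.ne').symm
      _ = (∏ i, (hherm.eigenvalues i) ^ ((r:ℝ)⁻¹)) ^ r := Finset.prod_pow _ _ _
      _ ≤ 1 := pow_le_one₀ hpownn hgm1
  -- conclude
  have hdet : A.det ^ 2 = ∏ i, hherm.eigenvalues i := by
    have h1 : M.det = ∏ i, hherm.eigenvalues i := by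
      simpa using hherm.det_eq_prod_eigenvalues
    rw [← h1, hM, Matrix.det_mul, Matrix.det_transpose, sq]
  nlinarith [sq_abs A.det, abs_nonneg A.det]
end

section
/- Let X = W H^T be a separable NMF of size r = rank(X): W ∈ ℝ^{m×r}, H ∈ ℝ_+^{n×r} separable. Then for any other factorization X = W* (H*)^T with H* ∈ ℝ_+^{n×r} separable, there exist a permutation matrix Π and an invertible diagonal matrix D such that W* = W D Π and H* = H D^{-1} Π. -/
open Matrix

/-- `H` is separable: some `r × r` row-submatrix of `H` is a diagonal matrix
with positive diagonal entries. -/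
def Separable {n r : Type*} [Fintype n] [Fintype r]
    (H : Matrix n r ℝ) : Prop :=
  ∃ K : r → n, Function.Injective K ∧
    (∀ i j : r, i ≠ j → H (K i) j = 0) ∧ (∀ i : r, 0 < H (K i) i)

/-- Left cancellation for a full column rank matrix. -/
lemma leftCancel {m r p : ℕ} (W : Matrix (Fin m) (Fin r) ℝ) (hW : W.rank = r)
    (A B : Matrix (Fin r) (Fin p) ℝ) (h : W * A = W * B) : A = B := by
  have hli : LinearIndependent ℝ (fun i => Wᵀ i) := by
    rw [linearIndependent_iff_card_eq_finrank_span, Fintype.card_fin, Set.finrank]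
    rw [rank_eq_finrank_span_cols] at hW
    exact hW.symm
  have hinj : Function.Injective W.mulVec := Matrix.mulVec_injective_iff.mpr hli
  ext k j
  have hcol : W.mulVec (fun k => A k j) = W.mulVec (fun k => B k j) := by
    ext i
    simpa [Matrix.mulVec, dotProduct, Matrix.mul_apply] using
      congrFun (congrFun h i) j
  exact congrFun (hinj hcol) k

/-- Identifiability of separable NMF: if `X = W Hᵀ` with `H` nonnegative
separable and `r = rank X`, then any other separable NMF `X = W* H*ᵀ` of size
`r` coincides with it up to a permutation and an invertible diagonal scaling:
`W* = W D Π` and `H* = H D⁻¹ Π`. -/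
theorem separable_NMF_identifiable {m n r : ℕ}
    (X : Matrix (Fin m) (Fin n) ℝ)
    (W Wstar : Matrix (Fin m) (Fin r) ℝ)
    (H Hstar : Matrix (Fin n) (Fin r) ℝ)
    (hrank : X.rank = r)
    (hH : ∀ i j, 0 ≤ H i j) (hHsep : Separable H)
    (hX : X = W * Hᵀ)
    (hHstar : ∀ i j, 0 ≤ Hstar i j) (hHstarSep : Separable Hstar)
    (hXstar : X = Wstar * Hstarᵀ) :
    ∃ (σ : Equiv.Perm (Fin r)) (d : Fin r → ℝ), (∀ i, d i ≠ 0) ∧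
      Wstar = W * Matrix.diagonal d * σ.permMatrix ℝ ∧
      Hstar = H * Matrix.diagonal (fun i => (d i)⁻¹) * σ.permMatrix ℝ := by
  obtain ⟨K, hKinj, hKoff, hKpos⟩ := hHsep
  obtain ⟨L, hLinj, hLoff, hLpos⟩ := hHstarSep
  -- ranks of W and Wstar
  have hWr : W.rank = r := by
    refine le_antisymm ((rank_le_card_width W).trans (by simp)) ?_
    have := rank_mul_le_left W Hᵀ
    rw [← hX, hrank] at this
    exact this
  have hWsr : Wstar.rank = r := by
    refine le_antisymm ((rank_le_card_width Wstar).trans (by simp)) ?_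
    have := rank_mul_le_left Wstar Hstarᵀ
    rw [← hXstar, hrank] at this
    exact this
  -- the mixing matrices
  set M : Matrix (Fin r) (Fin r) ℝ := fun i j => H (L j) i / Hstar (L j) j with hMdef
  set N : Matrix (Fin r) (Fin r) ℝ := fun i j => Hstar (K j) i / H (K j) j with hNdef
  have hMpos : ∀ i j, 0 ≤ M i j := fun i j => div_nonneg (hH _ _) (hLpos j).le
  have hNpos : ∀ i j, 0 ≤ N i j := fun i j => div_nonneg (hHstar _ _) (hKpos j).le
  -- Wstar = W * M
  have hXL : ∀ i j, (∑ k, W i k * H (L j) k) = Wstar i j * Hstar (L j) j := by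
    intro i j
    have h1 : (W * Hᵀ) i (L j) = (Wstar * Hstarᵀ) i (L j) := by rw [← hX, ← hXstar]
    simp only [Matrix.mul_apply, transpose_apply] at h1
    rw [h1]
    exact Finset.sum_eq_single j
      (fun k _ hk => by rw [hLoff j k (Ne.symm hk), mul_zero])
      (fun h => absurd (Finset.mem_univ j) h)
  have hWM : Wstar = W * M := by
    ext i j
    have hd : Hstar (L j) j ≠ 0 := (hLpos j).ne'
    simp only [Matrix.mul_apply]; simp only [hMdef]
    rw [show (∑ k, W i k * (H (L j) k / Hstar (L j) j))
        = (∑ k, W i k * H (L j) k) / Hstar (L j) j by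
      rw [Finset.sum_div]; exact Finset.sum_congr rfl fun k _ => (mul_div_assoc _ _ _).symm]
    rw [hXL i j, mul_div_cancel_right₀ _ hd]
  have hXK : ∀ i j, (∑ k, Wstar i k * Hstar (K j) k) = W i j * H (K j) j := by
    intro i j
    have h1 : (Wstar * Hstarᵀ) i (K j) = (W * Hᵀ) i (K j) := by rw [← hX, ← hXstar]
    simp only [Matrix.mul_apply, transpose_apply] at h1
    rw [h1]
    exact Finset.sum_eq_single j
      (fun k _ hk => by rw [hKoff j k (Ne.symm hk), mul_zero])
      (fun h => absurd (Finset.mem_univ j) h)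
  have hWN : W = Wstar * N := by
    ext i j
    have hd : H (K j) j ≠ 0 := (hKpos j).ne'
    simp only [Matrix.mul_apply]; simp only [hNdef]
    rw [show (∑ k, Wstar i k * (Hstar (K j) k / H (K j) j))
        = (∑ k, Wstar i k * Hstar (K j) k) / H (K j) j by
      rw [Finset.sum_div]; exact Finset.sum_congr rfl fun k _ => (mul_div_assoc _ _ _).symm]
    rw [hXK i j, mul_div_cancel_right₀ _ hd]
  -- Hᵀ = M * Hstarᵀ and Hstarᵀ = N * Hᵀ
  have hMH : Hᵀ = M * Hstarᵀ := by
    apply leftCancel W hWr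
    rw [← Matrix.mul_assoc, ← hWM, ← hX, ← hXstar]
  have hNH : Hstarᵀ = N * Hᵀ := by
    apply leftCancel Wstar hWsr
    rw [← Matrix.mul_assoc, ← hWN, ← hX, ← hXstar]
  -- right inverse of Hᵀ
  set S : Matrix (Fin n) (Fin r) ℝ :=
    fun i j => if i = K j then (H (K j) j)⁻¹ else 0 with hSdef
  have hHS : Hᵀ * S = 1 := by
    ext a b
    simp only [Matrix.mul_apply, transpose_apply]; simp only [hSdef, mul_ite, mul_zero]
    rw [Finset.sum_ite_eq' Finset.univ (K b) (fun i => H i a * (H (K b) b)⁻¹)]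
    simp only [Finset.mem_univ, if_true]
    by_cases hab : a = b
    · subst hab
      rw [mul_inv_cancel₀ (hKpos a).ne', Matrix.one_apply_eq]
    · rw [hKoff b a (Ne.symm hab), zero_mul, Matrix.one_apply_ne hab]
  -- M * N = 1
  have hMN : M * N = 1 := by
    have h1 : Hᵀ = (M * N) * Hᵀ := by
      rw [Matrix.mul_assoc, ← hNH, ← hMH]
    calc M * N = (M * N) * (Hᵀ * S) := by rw [hHS, Matrix.mul_one]
      _ = ((M * N) * Hᵀ) * S := (Matrix.mul_assoc (M * N) Hᵀ S).symm
      _ = Hᵀ * S := by rw [← h1]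
      _ = 1 := hHS
  have hNM : N * M = 1 := mul_eq_one_comm.mp hMN
  -- row structure of M
  have hMNa : ∀ i j, (∑ k, M i k * N k j) = (1 : Matrix (Fin r) (Fin r) ℝ) i j := by
    intro i j
    rw [← Matrix.mul_apply, hMN]
  have hNMa : ∀ i j, (∑ k, N i k * M k j) = (1 : Matrix (Fin r) (Fin r) ℝ) i j := by
    intro i j
    rw [← Matrix.mul_apply, hNM]
  have hterm : ∀ i j, i ≠ j → ∀ k, M i k * N k j = 0 := by
    intro i j hij k
    have h0 : (∑ k, M i k * N k j) = 0 := by rw [hMNa i j, Matrix.one_apply_ne hij]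
    have := (Finset.sum_eq_zero_iff_of_nonneg
      (fun k _ => mul_nonneg (hMpos i k) (hNpos k j))).mp h0
    exact this k (Finset.mem_univ k)
  have ex : ∀ i, ∃ j, M i j ≠ 0 := by
    intro i
    by_contra hc
    push_neg at hc
    have h1 : (∑ k, M i k * N k i) = 1 := by rw [hMNa i i, Matrix.one_apply_eq]
    rw [Finset.sum_eq_zero (fun k _ => by rw [hc k, zero_mul])] at h1
    exact zero_ne_one h1
  have uniq : ∀ i k k', M i k ≠ 0 → M i k' ≠ 0 → k = k' := by
    intro i k k' hk hk'
    by_contra hkk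
    -- rows k, k' of N vanish off column i
    have hNk : ∀ j, j ≠ i → N k j = 0 := fun j hj => by
      have := hterm i j (Ne.symm hj) k
      rcases mul_eq_zero.mp this with h | h
      · exact absurd h hk
      · exact h
    have hNk' : ∀ j, j ≠ i → N k' j = 0 := fun j hj => by
      have := hterm i j (Ne.symm hj) k'
      rcases mul_eq_zero.mp this with h | h
      · exact absurd h hk'
      · exact h
    have hsum1 : (∑ j, N k j * M j k) = N k i * M i k :=
      Finset.sum_eq_single i (fun j _ hj => by rw [hNk j hj, zero_mul])
        (fun h => absurd (Finset.mem_univ i) h)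
    have hsum2 : (∑ j, N k j * M j k') = N k i * M i k' :=
      Finset.sum_eq_single i (fun j _ hj => by rw [hNk j hj, zero_mul])
        (fun h => absurd (Finset.mem_univ i) h)
    have h1 : N k i * M i k = 1 := by rw [← hsum1, hNMa k k, Matrix.one_apply_eq]
    have h2 : N k i * M i k' = 0 := by rw [← hsum2, hNMa k k', Matrix.one_apply_ne hkk]
    have hNki : N k i ≠ 0 := fun h => by rw [h, zero_mul] at h1; exact zero_ne_one h1
    exact hk' (by rcases mul_eq_zero.mp h2 with h | h; exacts [absurd h hNki, h])
  choose σ0 hσ0 using ex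
  have hMrow : ∀ i j, j ≠ σ0 i → M i j = 0 := by
    intro i j hj
    by_contra hc
    exact hj (uniq i j (σ0 i) hc (hσ0 i))
  have hσinj : Function.Injective σ0 := by
    intro i i' hii
    by_contra hne
    have h1 : ∀ k, M i k * N k i' = 0 := hterm i i' hne
    have hNσ : N (σ0 i) i' = 0 := by
      rcases mul_eq_zero.mp (h1 (σ0 i)) with h | h
      · exact absurd h (hσ0 i)
      · exact h
    have h2 : (∑ k, M i' k * N k i') = 1 := by rw [hMNa i' i', Matrix.one_apply_eq]
    rw [Finset.sum_eq_single (σ0 i')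
      (fun k _ hk => by rw [hMrow i' k hk, zero_mul])
      (fun h => absurd (Finset.mem_univ _) h)] at h2
    rw [← hii, hNσ, mul_zero] at h2
    exact zero_ne_one h2
  let σ : Equiv.Perm (Fin r) := Equiv.ofBijective σ0 (Finite.injective_iff_bijective.mp hσinj)
  have hσ : ∀ i, σ i = σ0 i := fun i => rfl
  set d : Fin r → ℝ := fun i => M i (σ0 i) with hddef
  have hdne : ∀ i, d i ≠ 0 := fun i => hσ0 i
  have hP : ∀ i j, σ.permMatrix ℝ i j = if σ0 i = j then 1 else 0 := by
    intro i j
    simp [Equiv.Perm.permMatrix, PEquiv.toMatrix_apply, Equiv.toPEquiv_apply, σ,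
      Option.mem_def, eq_comm]
  have hMform : M = diagonal d * σ.permMatrix ℝ := by
    ext i j
    rw [Matrix.diagonal_mul, hP i j]
    by_cases h : σ0 i = j
    · subst h; simp [hddef]
    · rw [if_neg h, mul_zero, hMrow i j (fun hc => h hc.symm)]
  -- N = Pᵀ * D⁻¹
  set E : Matrix (Fin r) (Fin r) ℝ :=
    (σ.permMatrix ℝ)ᵀ * diagonal (fun i => (d i)⁻¹) with hEdef
  have hME : M * E = 1 := by
    ext i j
    have hE : ∀ k, E k j = (if σ0 j = k then 1 else 0) * (d j)⁻¹ := by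
      intro k
      rw [hEdef, Matrix.mul_diagonal, transpose_apply, hP j k]
    rw [Matrix.mul_apply]
    rw [Finset.sum_eq_single (σ0 i)
      (fun k _ hk => by rw [hMrow i k hk, zero_mul])
      (fun h => absurd (Finset.mem_univ _) h)]
    rw [hE (σ0 i)]
    by_cases hij : i = j
    · subst hij
      rw [if_pos rfl, one_mul, mul_inv_cancel₀ (hdne i), Matrix.one_apply_eq]
    · rw [if_neg (fun hc => hij (hσinj hc).symm), zero_mul, mul_zero,
        Matrix.one_apply_ne hij]
  have hNE : N = E := by
    calc N = N * (M * E) := by rw [hME, Matrix.mul_one]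
      _ = (N * M) * E := by rw [Matrix.mul_assoc]
      _ = E := by rw [hNM, Matrix.one_mul]
  refine ⟨σ, d, hdne, ?_, ?_⟩
  · rw [hWM, hMform, Matrix.mul_assoc]
  · have h1 : Hstarᵀ = (σ.permMatrix ℝ)ᵀ * diagonal (fun i => (d i)⁻¹) * Hᵀ := by
      rw [hNH, hNE, hEdef]
    have h2 := congrArg Matrix.transpose h1
    rw [transpose_transpose, Matrix.transpose_mul, Matrix.transpose_mul,
      transpose_transpose, transpose_transpose, diagonal_transpose] at h2
    rw [h2, Matrix.mul_assoc]
end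

section
/- Let X = U₁ G U₂^T where U₁ ∈ ℝ_+^{n₁×r} and U₂ ∈ ℝ_+^{n₂×r} are separable and r = rank(X). Then for any other factorization X = U₁* G* (U₂*)^T of size r with U₁*, U₂* separable, there exist permutation matrices Π₁, Π₂ and invertible diagonal matrices D₁, D₂ with U₁* = U₁ D₁ Π₁, U₂* = U₂ D₂ Π₂, and G* = Π₁^T D₁^{-1} G D₂^{-1} Π₂. -/
open Matrix

/-- A square real matrix of full rank has a two-sided inverse. -/
lemma aux_exists_inv {k : ℕ} (M : Matrix (Fin k) (Fin k) ℝ) (h : M.rank = k) :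
    ∃ N : Matrix (Fin k) (Fin k) ℝ, M * N = 1 ∧ N * M = 1 := by
  have hrange : LinearMap.range M.mulVecLin = ⊤ := by
    apply Submodule.eq_top_of_finrank_eq
    rw [Module.finrank_fin_fun]
    exact h
  have hsurj : Function.Surjective M.mulVecLin := LinearMap.range_eq_top.mp hrange
  choose x hx using fun i => hsurj (Pi.single i 1)
  refine ⟨Matrix.of fun j i => x i j, ?_, ?_⟩
  · ext a i
    have := congrFun (hx i) a
    simp only [Matrix.mulVecLin_apply, Matrix.mulVec, dotProduct] at this
    simp only [Matrix.mul_apply, Matrix.of_apply, Matrix.one_apply]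
    rw [this, Pi.single_apply]
  · rw [mul_eq_one_comm]
    ext a i
    have := congrFun (hx i) a
    simp only [Matrix.mulVecLin_apply, Matrix.mulVec, dotProduct] at this
    simp only [Matrix.mul_apply, Matrix.of_apply, Matrix.one_apply]
    rw [this, Pi.single_apply]

/-- A real matrix of full column rank has a left inverse. -/
lemma aux_left_inv {n k : ℕ} (U : Matrix (Fin n) (Fin k) ℝ) (h : U.rank = k) :
    ∃ L : Matrix (Fin k) (Fin n) ℝ, L * U = 1 := by
  have h2 : (Uᵀ * U).rank = k := by rw [Matrix.rank_transpose_mul_self]; exact h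
  obtain ⟨N, -, hNM⟩ := aux_exists_inv _ h2
  exact ⟨N * Uᵀ, by rw [Matrix.mul_assoc]; exact hNM⟩

lemma perm_tmul {r : ℕ} (σ : Equiv.Perm (Fin r)) :
    (σ.permMatrix ℝ)ᵀ * σ.permMatrix ℝ = 1 := by
  rw [Equiv.Perm.permMatrix, ← PEquiv.toMatrix_symm, ← PEquiv.toMatrix_trans,
    ← Equiv.toPEquiv_symm, ← Equiv.toPEquiv_trans]
  simp

lemma perm_mult {r : ℕ} (σ : Equiv.Perm (Fin r)) :
    σ.permMatrix ℝ * (σ.permMatrix ℝ)ᵀ = 1 := by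
  rw [Equiv.Perm.permMatrix, ← PEquiv.toMatrix_symm, ← PEquiv.toMatrix_trans,
    ← Equiv.toPEquiv_symm, ← Equiv.toPEquiv_trans]
  simp

/-- A nonnegative matrix with a nonnegative (two-sided) inverse is a
positive diagonal times a permutation matrix. -/
lemma monomial_of_nonneg_inv {r : ℕ} (A B : Matrix (Fin r) (Fin r) ℝ)
    (hAB : A * B = 1) (hBA : B * A = 1)
    (hA : ∀ i j, 0 ≤ A i j) (hB : ∀ i j, 0 ≤ B i j) :
    ∃ (σ : Equiv.Perm (Fin r)) (d : Fin r → ℝ), (∀ i, 0 < d i) ∧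
      A = Matrix.diagonal d * σ.permMatrix ℝ := by
  have key : ∀ i, ∃ j, 0 < A i j ∧ 0 < B j i := by
    intro i
    by_contra h
    push_neg at h
    have h1 : (A * B) i i = 1 := by rw [hAB]; simp
    rw [Matrix.mul_apply] at h1
    have h0 : ∀ j ∈ Finset.univ, A i j * B j i = 0 := by
      intro j _
      rcases lt_or_eq_of_le (hA i j) with hAp | hAe
      · rcases lt_or_eq_of_le (hB j i) with hBp | hBe
        · exact absurd hBp (not_lt.mpr (h j hAp))
        · rw [← hBe, mul_zero]
      · rw [← hAe, zero_mul]
    rw [Finset.sum_eq_zero h0] at h1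
    exact zero_ne_one h1
  choose f hfA hfB using key
  have hzero : ∀ i j, j ≠ f i → A i j = 0 := by
    intro i j hji
    by_contra hne
    have hpos : 0 < A i j := lt_of_le_of_ne (hA i j) (Ne.symm hne)
    have h1 : (B * A) (f i) j = 0 := by rw [hBA]; exact Matrix.one_apply_ne (Ne.symm hji)
    rw [Matrix.mul_apply] at h1
    have hterm : B (f i) i * A i j = 0 :=
      (Finset.sum_eq_zero_iff_of_nonneg
        (fun l _ => mul_nonneg (hB _ _) (hA _ _))).mp h1 i (Finset.mem_univ i)
    exact absurd hterm (ne_of_gt (mul_pos (hfB i) hpos))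
  have hinj : Function.Injective f := by
    intro i₁ i₂ he
    by_contra hne
    have h0 : (A * B) i₁ i₂ = 0 := by rw [hAB]; exact Matrix.one_apply_ne hne
    rw [Matrix.mul_apply] at h0
    have hterm : A i₁ (f i₁) * B (f i₁) i₂ = 0 :=
      (Finset.sum_eq_zero_iff_of_nonneg
        (fun l _ => mul_nonneg (hA _ _) (hB _ _))).mp h0 (f i₁) (Finset.mem_univ _)
    have : 0 < A i₁ (f i₁) * B (f i₁) i₂ := by
      rw [he]; exact mul_pos (by rw [← he]; exact hfA i₁) (hfB i₂)
    exact absurd hterm (ne_of_gt this)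
  have hbij : Function.Bijective f := Finite.injective_iff_bijective.mp hinj
  refine ⟨Equiv.ofBijective f hbij, fun i => A i (f i), hfA, ?_⟩
  ext i j
  rw [Matrix.diagonal_mul]
  simp only [Equiv.Perm.permMatrix, PEquiv.toMatrix_apply, Equiv.toPEquiv_apply,
    Equiv.ofBijective_apply, Option.mem_def, Option.some.injEq]
  by_cases hj : f i = j
  · subst hj; simp
  · rw [if_neg hj, mul_zero]
    exact hzero i j (fun h => hj h.symm)


lemma cancel_both {n₁ n₂ r : ℕ} (U₁ : Matrix (Fin n₁) (Fin r) ℝ)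
    (U₂ : Matrix (Fin n₂) (Fin r) ℝ)
    (L₁ : Matrix (Fin r) (Fin n₁) ℝ) (L₂ : Matrix (Fin r) (Fin n₂) ℝ)
    (hL₁ : L₁ * U₁ = 1) (hL₂ : L₂ * U₂ = 1)
    {M N : Matrix (Fin r) (Fin r) ℝ}
    (h : U₁ * M * U₂ᵀ = U₁ * N * U₂ᵀ) : M = N := by
  have h2 : U₂ᵀ * L₂ᵀ = 1 := by rw [← Matrix.transpose_mul, hL₂, Matrix.transpose_one]
  calc M = (L₁ * U₁) * M * (U₂ᵀ * L₂ᵀ) := by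
        rw [hL₁, h2, Matrix.one_mul, Matrix.mul_one]
    _ = L₁ * (U₁ * M * U₂ᵀ) * L₂ᵀ := by simp only [Matrix.mul_assoc]
    _ = L₁ * (U₁ * N * U₂ᵀ) * L₂ᵀ := by rw [h]
    _ = (L₁ * U₁) * N * (U₂ᵀ * L₂ᵀ) := by simp only [Matrix.mul_assoc]
    _ = N := by rw [hL₁, h2, Matrix.one_mul, Matrix.mul_one]

/-- One-sided factor comparison: the left factors of two rank-`r`
tri-factorizations differ by an invertible nonnegative change of basis
whose inverse is also nonnegative. -/
lemma side_lemma {n₁ n₂ r : ℕ}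
    (U₁ U₁star : Matrix (Fin n₁) (Fin r) ℝ) (U₂ U₂star : Matrix (Fin n₂) (Fin r) ℝ)
    (G Gstar : Matrix (Fin r) (Fin r) ℝ)
    (hU₁nn : ∀ i j, 0 ≤ U₁ i j) (hU₁sep : Separable U₁)
    (hU₁star : ∀ i j, 0 ≤ U₁star i j) (hU₁starSep : Separable U₁star)
    (hrU₁ : U₁.rank = r) (hrU₂ : U₂.rank = r) (hrU₂s : U₂star.rank = r)
    (hrG : G.rank = r) (hrGs : Gstar.rank = r)
    (heq : U₁ * G * U₂ᵀ = U₁star * Gstar * U₂starᵀ) :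
    ∃ A B : Matrix (Fin r) (Fin r) ℝ, U₁ * A = U₁star ∧ A * B = 1 ∧ B * A = 1 ∧
      (∀ i j, 0 ≤ A i j) ∧ (∀ i j, 0 ≤ B i j) := by
  obtain ⟨L₁, hL₁⟩ := aux_left_inv U₁ hrU₁
  obtain ⟨L₂, hL₂⟩ := aux_left_inv U₂ hrU₂
  obtain ⟨L₂s, hL₂s⟩ := aux_left_inv U₂star hrU₂s
  obtain ⟨Gi, hGi1, hGi2⟩ := aux_exists_inv G hrG
  obtain ⟨Gsi, hGsi1, hGsi2⟩ := aux_exists_inv Gstar hrGs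
  set A : Matrix (Fin r) (Fin r) ℝ := G * U₂ᵀ * (L₂sᵀ * Gsi) with hAdef
  set B : Matrix (Fin r) (Fin r) ℝ := Gstar * U₂starᵀ * (L₂ᵀ * Gi) with hBdef
  have h1 : U₂starᵀ * L₂sᵀ = 1 := by
    rw [← Matrix.transpose_mul, hL₂s, Matrix.transpose_one]
  have h1' : U₂ᵀ * L₂ᵀ = 1 := by
    rw [← Matrix.transpose_mul, hL₂, Matrix.transpose_one]
  have hUA : U₁ * A = U₁star := by
    calc U₁ * A = U₁ * G * U₂ᵀ * (L₂sᵀ * Gsi) := by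
          simp only [hAdef, Matrix.mul_assoc]
      _ = U₁star * Gstar * U₂starᵀ * (L₂sᵀ * Gsi) := by rw [heq]
      _ = U₁star * (Gstar * ((U₂starᵀ * L₂sᵀ) * Gsi)) := by simp only [Matrix.mul_assoc]
      _ = U₁star := by rw [h1, Matrix.one_mul, hGsi1, Matrix.mul_one]
  have hUB : U₁star * B = U₁ := by
    calc U₁star * B = U₁star * Gstar * U₂starᵀ * (L₂ᵀ * Gi) := by
          simp only [hBdef, Matrix.mul_assoc]
      _ = U₁ * G * U₂ᵀ * (L₂ᵀ * Gi) := by rw [heq]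
      _ = U₁ * (G * ((U₂ᵀ * L₂ᵀ) * Gi)) := by simp only [Matrix.mul_assoc]
      _ = U₁ := by rw [h1', Matrix.one_mul, hGi1, Matrix.mul_one]
  have hABl : U₁ * (A * B) = U₁ * (1 : Matrix (Fin r) (Fin r) ℝ) := by
    rw [Matrix.mul_one, ← Matrix.mul_assoc, hUA, hUB]
  have hAB : A * B = 1 := by
    have h3 := congrArg (fun Z => L₁ * Z) hABl
    simpa only [← Matrix.mul_assoc, hL₁, Matrix.one_mul, Matrix.mul_one] using h3
  have hBA : B * A = 1 := mul_eq_one_comm.mp hAB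
  obtain ⟨K, -, hK0, hKpos⟩ := hU₁sep
  obtain ⟨Ks, -, hKs0, hKspos⟩ := hU₁starSep
  have hAnn : ∀ i j, 0 ≤ A i j := by
    intro i j
    have he : U₁star (K i) j = U₁ (K i) i * A i j := by
      rw [← hUA, Matrix.mul_apply, Finset.sum_eq_single i]
      · intro b _ hb
        rw [hK0 i b (Ne.symm hb), zero_mul]
      · intro hi; exact absurd (Finset.mem_univ i) hi
    have hpos := hKpos i
    have hnn := hU₁star (K i) j
    rw [he] at hnn
    nlinarith
  have hBnn : ∀ i j, 0 ≤ B i j := by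
    intro i j
    have he : U₁ (Ks i) j = U₁star (Ks i) i * B i j := by
      rw [← hUB, Matrix.mul_apply, Finset.sum_eq_single i]
      · intro b _ hb
        rw [hKs0 i b (Ne.symm hb), zero_mul]
      · intro hi; exact absurd (Finset.mem_univ i) hi
    have hpos := hKspos i
    have hnn := hU₁nn (Ks i) j
    rw [he] at hnn
    nlinarith
  exact ⟨A, B, hUA, hAB, hBA, hAnn, hBnn⟩
/-- Identifiability of separable order-2 nTD (nonnegative matrix
tri-factorization): if `X = U₁ G U₂ᵀ` with `U₁, U₂` nonnegative separable and
`r = rank X`, then any other such tri-factorization of size `r` with separable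
nonnegative factors coincides up to permutations and invertible diagonal
scalings: `U₁* = U₁ D₁ Π₁`, `U₂* = U₂ D₂ Π₂`, `G* = Π₁ᵀ D₁⁻¹ G D₂⁻¹ Π₂`. -/
theorem separable_tri_factorization_identifiable {n₁ n₂ r : ℕ}
    (X : Matrix (Fin n₁) (Fin n₂) ℝ)
    (U₁ U₁star : Matrix (Fin n₁) (Fin r) ℝ)
    (U₂ U₂star : Matrix (Fin n₂) (Fin r) ℝ)
    (G Gstar : Matrix (Fin r) (Fin r) ℝ)
    (hrank : X.rank = r)
    (hU₁ : ∀ i j, 0 ≤ U₁ i j) (hU₁sep : Separable U₁)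
    (hU₂ : ∀ i j, 0 ≤ U₂ i j) (hU₂sep : Separable U₂)
    (hX : X = U₁ * G * U₂ᵀ)
    (hU₁star : ∀ i j, 0 ≤ U₁star i j) (hU₁starSep : Separable U₁star)
    (hU₂star : ∀ i j, 0 ≤ U₂star i j) (hU₂starSep : Separable U₂star)
    (hXstar : X = U₁star * Gstar * U₂starᵀ) :
    ∃ (σ₁ σ₂ : Equiv.Perm (Fin r)) (d₁ d₂ : Fin r → ℝ),
      (∀ i, d₁ i ≠ 0) ∧ (∀ i, d₂ i ≠ 0) ∧
      U₁star = U₁ * Matrix.diagonal d₁ * σ₁.permMatrix ℝ ∧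
      U₂star = U₂ * Matrix.diagonal d₂ * σ₂.permMatrix ℝ ∧
      Gstar = (σ₁.permMatrix ℝ)ᵀ * Matrix.diagonal (fun i => (d₁ i)⁻¹) * G *
        Matrix.diagonal (fun i => (d₂ i)⁻¹) * σ₂.permMatrix ℝ := by
  -- rank facts
  have hle : ∀ {a b : ℕ} (M : Matrix (Fin a) (Fin b) ℝ), M.rank ≤ b := fun M => by
    simpa using M.rank_le_card_width
  have hrU₁ : U₁.rank = r := le_antisymm (hle U₁) (by
    calc r = X.rank := hrank.symm
      _ ≤ (U₁ * G).rank := by rw [hX]; exact Matrix.rank_mul_le_left _ _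
      _ ≤ U₁.rank := Matrix.rank_mul_le_left _ _)
  have hrU₂ : U₂.rank = r := le_antisymm (hle U₂) (by
    calc r = X.rank := hrank.symm
      _ ≤ (U₂ᵀ).rank := by rw [hX]; exact Matrix.rank_mul_le_right _ _
      _ = U₂.rank := Matrix.rank_transpose _)
  have hrG : G.rank = r := le_antisymm (hle G) (by
    calc r = X.rank := hrank.symm
      _ ≤ (G * U₂ᵀ).rank := by
          rw [hX, Matrix.mul_assoc]; exact Matrix.rank_mul_le_right _ _
      _ ≤ G.rank := Matrix.rank_mul_le_left _ _)
  have hrU₁s : U₁star.rank = r := le_antisymm (hle U₁star) (by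
    calc r = X.rank := hrank.symm
      _ ≤ (U₁star * Gstar).rank := by rw [hXstar]; exact Matrix.rank_mul_le_left _ _
      _ ≤ U₁star.rank := Matrix.rank_mul_le_left _ _)
  have hrU₂s : U₂star.rank = r := le_antisymm (hle U₂star) (by
    calc r = X.rank := hrank.symm
      _ ≤ (U₂starᵀ).rank := by rw [hXstar]; exact Matrix.rank_mul_le_right _ _
      _ = U₂star.rank := Matrix.rank_transpose _)
  have hrGs : Gstar.rank = r := le_antisymm (hle Gstar) (by
    calc r = X.rank := hrank.symm
      _ ≤ (Gstar * U₂starᵀ).rank := by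
          rw [hXstar, Matrix.mul_assoc]; exact Matrix.rank_mul_le_right _ _
      _ ≤ Gstar.rank := Matrix.rank_mul_le_left _ _)
  have heq : U₁ * G * U₂ᵀ = U₁star * Gstar * U₂starᵀ := hX.symm.trans hXstar
  -- side 1
  obtain ⟨A₁, B₁, hUA₁, hAB₁, hBA₁, hAnn₁, hBnn₁⟩ :=
    side_lemma U₁ U₁star U₂ U₂star G Gstar hU₁ hU₁sep hU₁star hU₁starSep
      hrU₁ hrU₂ hrU₂s hrG hrGs heq
  -- side 2 (transpose everything)
  have heqT : U₂ * Gᵀ * U₁ᵀ = U₂star * Gstarᵀ * U₁starᵀ := by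
    have := congrArg Matrix.transpose heq
    simpa only [Matrix.transpose_mul, Matrix.transpose_transpose, Matrix.mul_assoc] using this
  have hrGT : Gᵀ.rank = r := by rw [Matrix.rank_transpose]; exact hrG
  have hrGsT : Gstarᵀ.rank = r := by rw [Matrix.rank_transpose]; exact hrGs
  obtain ⟨A₂, B₂, hUA₂, hAB₂, hBA₂, hAnn₂, hBnn₂⟩ :=
    side_lemma U₂ U₂star U₁ U₁star Gᵀ Gstarᵀ hU₂ hU₂sep hU₂star hU₂starSep
      hrU₂ hrU₁ hrU₁s hrGT hrGsT heqT
  -- monomial structure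
  obtain ⟨σ₁, d₁, hd₁pos, hA₁eq⟩ := monomial_of_nonneg_inv A₁ B₁ hAB₁ hBA₁ hAnn₁ hBnn₁
  obtain ⟨σ₂, d₂, hd₂pos, hA₂eq⟩ := monomial_of_nonneg_inv A₂ B₂ hAB₂ hBA₂ hAnn₂ hBnn₂
  -- the G equation
  obtain ⟨L₁, hL₁⟩ := aux_left_inv U₁ hrU₁
  obtain ⟨L₂, hL₂⟩ := aux_left_inv U₂ hrU₂
  have hsub : U₁ * (A₁ * Gstar * A₂ᵀ) * U₂ᵀ = U₁ * G * U₂ᵀ := by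
    rw [heq, ← hUA₁, ← hUA₂, Matrix.transpose_mul]
    simp only [Matrix.mul_assoc]
  have hGeq : A₁ * Gstar * A₂ᵀ = G := cancel_both U₁ U₂ L₁ L₂ hL₁ hL₂ hsub
  refine ⟨σ₁, σ₂, d₁, d₂, fun i => (hd₁pos i).ne', fun i => (hd₂pos i).ne', ?_, ?_, ?_⟩
  · rw [← hUA₁, hA₁eq, Matrix.mul_assoc]
  · rw [← hUA₂, hA₂eq, Matrix.mul_assoc]
  · have hd₁e : Matrix.diagonal (fun i => (d₁ i)⁻¹) * Matrix.diagonal d₁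
        = (1 : Matrix (Fin r) (Fin r) ℝ) := by
      rw [Matrix.diagonal_mul_diagonal]
      ext i j
      rcases eq_or_ne i j with rfl | h
      · simp [inv_mul_cancel₀ (hd₁pos i).ne']
      · simp [Matrix.diagonal_apply_ne _ h, Matrix.one_apply_ne h]
    have hd₂e : Matrix.diagonal d₂ * Matrix.diagonal (fun i => (d₂ i)⁻¹)
        = (1 : Matrix (Fin r) (Fin r) ℝ) := by
      rw [Matrix.diagonal_mul_diagonal]
      ext i j
      rcases eq_or_ne i j with rfl | h
      · simp [mul_inv_cancel₀ (hd₂pos i).ne']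
      · simp [Matrix.diagonal_apply_ne _ h, Matrix.one_apply_ne h]
    rw [← hGeq, hA₁eq, hA₂eq]
    simp only [Matrix.transpose_mul, Matrix.diagonal_transpose, Matrix.mul_assoc]
    rw [← Matrix.mul_assoc (Matrix.diagonal d₂), hd₂e, Matrix.one_mul]
    rw [perm_tmul σ₂, Matrix.mul_one]
    rw [← Matrix.mul_assoc (Matrix.diagonal fun i => (d₁ i)⁻¹), hd₁e, Matrix.one_mul]
    rw [← Matrix.mul_assoc, perm_tmul σ₁, Matrix.one_mul]
end

section
/- Let U₁ ∈ ℝ^{n₁×r₁} satisfy the SSC and U₂ ∈ ℝ^{n₂×r₂} be separable. Then the Kronecker product U₁ ⊗ U₂ ∈ ℝ^{n₁n₂ × r₁r₂} satisfies the SSC. -/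
open Matrix Kronecker
set_option linter.unusedSectionVars false

/-- The sufficiently scattered condition (SSC1 and SSC2) for a nonnegative
matrix `H ∈ ℝ₊^{n×r}`. -/
def SSC {n r : Type*} [Fintype n] [Fintype r] [DecidableEq r]
    (H : Matrix n r ℝ) : Prop :=
  (∀ i j, 0 ≤ H i j) ∧
  ({x : r → ℝ | (∀ i, 0 ≤ x i) ∧
      Real.sqrt ((Fintype.card r : ℝ) - 1) * l2 x ≤ ∑ i, x i} ⊆ coneRows H) ∧
  ({y : r → ℝ | ∀ i, 0 ≤ (H *ᵥ y) i} ∩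
      frontier {x : r → ℝ | l2 x ≤ ∑ i, x i} =
    {v : r → ℝ | ∃ lam : ℝ, 0 ≤ lam ∧ ∃ k : r, v = lam • (Pi.single k 1 : r → ℝ)})

section Helpers

variable {ι : Type*} [Fintype ι] [DecidableEq ι]

lemma l2_nonneg (x : ι → ℝ) : 0 ≤ l2 x := Real.sqrt_nonneg _

lemma l2_sq (x : ι → ℝ) : l2 x ^ 2 = ∑ i, x i ^ 2 :=
  Real.sq_sqrt (Finset.sum_nonneg fun _ _ => sq_nonneg _)

lemma l2_eq_zero {x : ι → ℝ} (h : l2 x = 0) : x = 0 := by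
  have h2 : ∑ i, x i ^ 2 = 0 := by
    have := l2_sq x; rw [h] at this; simpa using this.symm
  funext i
  have := (Finset.sum_eq_zero_iff_of_nonneg (fun i _ => sq_nonneg (x i))).mp h2 i
    (Finset.mem_univ i)
  exact pow_eq_zero_iff (n := 2) (by norm_num) |>.mp this

/-- Cauchy–Schwarz: a sum over a finset is at most `√card · √(sum of squares)`. -/
lemma sum_le_sqrt_card_mul (s : Finset ι) (x : ι → ℝ) :
    ∑ i ∈ s, x i ≤ Real.sqrt s.card * Real.sqrt (∑ i ∈ s, x i ^ 2) := by
  have h := Real.sum_mul_le_sqrt_mul_sqrt s (fun _ => (1 : ℝ)) x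
  simpa using h

/-- Minkowski inequality for `l2`. -/
lemma l2_add_le (a b : ι → ℝ) : l2 (fun i => a i + b i) ≤ l2 a + l2 b := by
  have hab : ∑ i, a i * b i ≤ l2 a * l2 b := by
    have := Real.sum_mul_le_sqrt_mul_sqrt Finset.univ a b
    simpa [l2] using this
  have h1 : ∑ i, (a i + b i) ^ 2 ≤ (l2 a + l2 b) ^ 2 := by
    have ha := l2_sq a; have hb := l2_sq b
    have hsplit : ∑ i, (a i + b i) ^ 2
        = (∑ i, (a i ^ 2 + b i ^ 2)) + ∑ i, 2 * (a i * b i) := by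
      rw [← Finset.sum_add_distrib]; congr 1; funext i; ring
    have hsplit2 : ∑ i, (a i ^ 2 + b i ^ 2) = (∑ i, a i ^ 2) + ∑ i, b i ^ 2 :=
      Finset.sum_add_distrib
    have hsplit3 : ∑ i, 2 * (a i * b i) = 2 * ∑ i, a i * b i := by
      rw [Finset.mul_sum]
    rw [hsplit, hsplit2, hsplit3, ← ha, ← hb]; nlinarith [hab]
  calc l2 (fun i => a i + b i) = Real.sqrt (∑ i, (a i + b i) ^ 2) := rfl
    _ ≤ Real.sqrt ((l2 a + l2 b) ^ 2) := Real.sqrt_le_sqrt h1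
    _ = l2 a + l2 b := Real.sqrt_sq (add_nonneg (l2_nonneg a) (l2_nonneg b))

/-- Membership in the cone `√(r-1)‖x‖ ≤ eᵀx` forces nonnegativity. -/
lemma cone_nonneg {x : ι → ℝ}
    (h : Real.sqrt ((Fintype.card ι : ℝ) - 1) * l2 x ≤ ∑ i, x i) (i : ι) :
    0 ≤ x i := by
  by_contra hneg
  push_neg at hneg
  have hcard : (1 : ℕ) ≤ Fintype.card ι := Fintype.card_pos_iff.mpr ⟨i⟩
  have h1 : ∑ j ∈ Finset.univ.erase i, x j ≤
      Real.sqrt ((Fintype.card ι : ℝ) - 1) * l2 x := by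
    have hcs := sum_le_sqrt_card_mul (Finset.univ.erase i) x
    have hcard' : ((Finset.univ.erase i).card : ℝ) = (Fintype.card ι : ℝ) - 1 := by
      rw [Finset.card_erase_of_mem (Finset.mem_univ i), Finset.card_univ,
        Nat.cast_sub hcard, Nat.cast_one]
    have hmono : Real.sqrt (∑ j ∈ Finset.univ.erase i, x j ^ 2) ≤ l2 x := by
      apply Real.sqrt_le_sqrt
      exact Finset.sum_le_sum_of_subset_of_nonneg (Finset.subset_univ _)
        (fun j _ _ => sq_nonneg _)
    calc ∑ j ∈ Finset.univ.erase i, x j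
        ≤ Real.sqrt ((Finset.univ.erase i).card) *
            Real.sqrt (∑ j ∈ Finset.univ.erase i, x j ^ 2) := hcs
      _ ≤ Real.sqrt ((Fintype.card ι : ℝ) - 1) * l2 x := by
          rw [hcard']
          exact mul_le_mul_of_nonneg_left hmono (Real.sqrt_nonneg _)
  have h2 : ∑ j, x j = x i + ∑ j ∈ Finset.univ.erase i, x j :=
    (Finset.add_sum_erase _ _ (Finset.mem_univ i)).symm
  linarith [h, h1, h2]

/-- Two-term Cauchy–Schwarz. -/
lemma two_term_CS {A₁ A₂ B₁ B₂ : ℝ} (hA₁ : 0 ≤ A₁) (hA₂ : 0 ≤ A₂)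
    (hB₁ : 0 ≤ B₁) (hB₂ : 0 ≤ B₂) :
    A₁ * B₁ + A₂ * B₂ ≤ Real.sqrt (A₁ ^ 2 + A₂ ^ 2) * Real.sqrt (B₁ ^ 2 + B₂ ^ 2) := by
  have h1 : (A₁ * B₁ + A₂ * B₂) ^ 2 ≤ (A₁ ^ 2 + A₂ ^ 2) * (B₁ ^ 2 + B₂ ^ 2) := by
    nlinarith [sq_nonneg (A₁ * B₂ - A₂ * B₁)]
  calc A₁ * B₁ + A₂ * B₂ = Real.sqrt ((A₁ * B₁ + A₂ * B₂) ^ 2) :=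
        (Real.sqrt_sq (by positivity)).symm
    _ ≤ Real.sqrt ((A₁ ^ 2 + A₂ ^ 2) * (B₁ ^ 2 + B₂ ^ 2)) := Real.sqrt_le_sqrt h1
    _ = _ := Real.sqrt_mul (by positivity) _

/-- Dual cone computation: if `w` has nonnegative inner product with every
element of the cone `{x ≥ 0, √(r-1)‖x‖ ≤ eᵀx}`, then `‖w‖ ≤ eᵀw`. -/
lemma dual_of_cone {w : ι → ℝ} (hcard : 1 ≤ Fintype.card ι)
    (hw : ∀ x : ι → ℝ, (∀ i, 0 ≤ x i) →
      Real.sqrt ((Fintype.card ι : ℝ) - 1) * l2 x ≤ ∑ i, x i →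
      0 ≤ ∑ i, x i * w i) :
    l2 w ≤ ∑ i, w i := by
  by_contra hcon
  push_neg at hcon
  set N := l2 w with hN
  have hN0 : 0 < N := by
    rcases (l2_nonneg w).lt_or_eq with h | h
    · exact h
    · exfalso
      have hw0 : w = 0 := l2_eq_zero h.symm
      have hz : ∑ i, w i = 0 := by rw [hw0]; simp
      rw [hz, hN] at hcon
      exact absurd hcon (by rw [← h]; exact lt_irrefl 0)
  set r : ℝ := (Fintype.card ι : ℝ) with hr
  have hr1 : (1 : ℝ) ≤ r := by rw [hr]; exact_mod_cast hcard
  set s : ℝ := (∑ i, w i) / N with hs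
  have hs1 : s < 1 := by
    rw [hs]
    exact (div_lt_one hN0).mpr hcon
  -- choose t
  set q : ℝ := Real.sqrt ((r - 1) * (r - s ^ 2)) with hq
  set t : ℝ := if s ≤ 0 then 1 else (s + q) / r with ht
  have hrs2 : 0 < r - s ^ 2 ∨ s ≤ 0 := by
    by_cases h : s ≤ 0
    · exact Or.inr h
    · push_neg at h
      left; nlinarith
  have key : 0 ≤ t * r - s ∧ 0 ≤ r * t ^ 2 - 2 * t * s + s ^ 2 - r + 1 ∧ t * s < 1 := by
    by_cases hcase : s ≤ 0
    · rw [ht, if_pos hcase]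
      refine ⟨by linarith, by nlinarith, by linarith⟩
    · push_neg at hcase
      have hrs : 0 < r - s ^ 2 := hrs2.resolve_right (not_le.mpr hcase)
      have hq2 : q ^ 2 = (r - 1) * (r - s ^ 2) :=
        Real.sq_sqrt (by nlinarith)
      have hq0 : 0 ≤ q := Real.sqrt_nonneg _
      have hqle : q ≤ r - s ^ 2 := by
        rw [hq]
        calc Real.sqrt ((r - 1) * (r - s ^ 2)) ≤ Real.sqrt ((r - s ^ 2) ^ 2) := by
              apply Real.sqrt_le_sqrt
              nlinarith [mul_nonneg hrs.le (show (0:ℝ) ≤ 1 - s ^ 2 by nlinarith)]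
          _ = r - s ^ 2 := Real.sqrt_sq (by linarith)
      rw [ht, if_neg (not_le.mpr hcase)]
      have hrpos : (0 : ℝ) < r := by linarith
      refine ⟨?_, ?_, ?_⟩
      · rw [div_mul_cancel₀ _ (ne_of_gt hrpos)]; linarith
      · have : r * ((s + q) / r) ^ 2 - 2 * ((s + q) / r) * s + s ^ 2 - r + 1 = 0 := by
          field_simp
          nlinarith [hq2]
        linarith [this]
      · rw [div_mul_eq_mul_div, div_lt_one hrpos]
        nlinarith
  obtain ⟨hA, hB, hC⟩ := key
  set x : ι → ℝ := fun i => t * N - w i with hx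
  have hsumx : ∑ i, x i = N * (t * r - s) := by
    rw [hx]
    simp only [Finset.sum_sub_distrib, Finset.sum_const, Finset.card_univ, nsmul_eq_mul]
    have : (∑ i, w i) = s * N := by rw [hs]; field_simp
    rw [this, hr]; ring
  have hl2x : l2 x ^ 2 = N ^ 2 * (r * t ^ 2 - 2 * t * s + 1) := by
    rw [l2_sq]
    have hw2 : ∑ i, w i ^ 2 = N ^ 2 := (l2_sq w).symm
    have hwsum : (∑ i, w i) = s * N := by rw [hs]; field_simp
    have : ∑ i, x i ^ 2 =
        (Fintype.card ι : ℝ) * (t * N) ^ 2 - 2 * (t * N) * (∑ i, w i) + ∑ i, w i ^ 2 := by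
      rw [hx]
      have : ∀ i, (t * N - w i) ^ 2 = (t * N) ^ 2 - 2 * (t * N) * w i + w i ^ 2 := by
        intro i; ring
      simp only [this]
      rw [Finset.sum_add_distrib, Finset.sum_sub_distrib, Finset.sum_const,
        Finset.card_univ, nsmul_eq_mul, ← Finset.mul_sum]
    rw [this, hw2, hwsum, ← hr]; ring
  have hcone : Real.sqrt (r - 1) * l2 x ≤ ∑ i, x i := by
    have hsx : 0 ≤ ∑ i, x i := by rw [hsumx]; positivity
    have hsq : (r - 1) * l2 x ^ 2 ≤ (∑ i, x i) ^ 2 := by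
      rw [hl2x, hsumx]
      have hN2 : (0:ℝ) ≤ N ^ 2 := sq_nonneg N
      calc (r - 1) * (N ^ 2 * (r * t ^ 2 - 2 * t * s + 1))
          = N ^ 2 * ((r - 1) * (r * t ^ 2 - 2 * t * s + 1)) := by ring
        _ ≤ N ^ 2 * (t * r - s) ^ 2 := by
            apply mul_le_mul_of_nonneg_left _ hN2
            nlinarith [hB]
        _ = (N * (t * r - s)) ^ 2 := by ring
    calc Real.sqrt (r - 1) * l2 x = Real.sqrt ((r - 1) * l2 x ^ 2) := by
          rw [Real.sqrt_mul (by linarith), Real.sqrt_sq (l2_nonneg x)]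
      _ ≤ Real.sqrt ((∑ i, x i) ^ 2) := Real.sqrt_le_sqrt hsq
      _ = ∑ i, x i := Real.sqrt_sq hsx
  have hx0 : ∀ i, 0 ≤ x i := cone_nonneg hcone
  have hinner := hw x hx0 hcone
  have : ∑ i, x i * w i = N ^ 2 * (t * s - 1) := by
    rw [hx]
    have hw2 : ∑ i, w i ^ 2 = N ^ 2 := (l2_sq w).symm
    have hwsum : (∑ i, w i) = s * N := by rw [hs]; field_simp
    have : ∑ i, (t * N - w i) * w i = t * N * (∑ i, w i) - ∑ i, w i ^ 2 := by
      have expand : ∀ i : ι, (t * N - w i) * w i = t * N * w i - w i ^ 2 := fun i => by ring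
      simp only [expand]
      rw [Finset.sum_sub_distrib, ← Finset.mul_sum]
    rw [this, hw2, hwsum]; ring
  rw [this] at hinner
  nlinarith [hinner, hC, pow_pos hN0 2]

lemma continuous_l2 : Continuous (l2 : (ι → ℝ) → ℝ) := by
  apply Real.continuous_sqrt.comp
  exact continuous_finset_sum _ (fun i _ => (continuous_apply i).pow 2)

lemma isClosed_D : IsClosed {x : ι → ℝ | l2 x ≤ ∑ i, x i} :=
  isClosed_le continuous_l2 (continuous_finset_sum _ (fun i _ => continuous_apply i))

/-- On the frontier of `D`, the defining inequality is an equality. -/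
lemma frontier_D_eq {x : ι → ℝ}
    (hx : x ∈ frontier {x : ι → ℝ | l2 x ≤ ∑ i, x i}) : l2 x = ∑ i, x i := by
  have h1 : x ∈ {x : ι → ℝ | l2 x ≤ ∑ i, x i} := by
    have := hx.1
    rwa [isClosed_D.closure_eq] at this
  have h2 : x ∉ interior {x : ι → ℝ | l2 x ≤ ∑ i, x i} := hx.2
  have h1' : l2 x ≤ ∑ i, x i := h1
  rcases lt_or_eq_of_le h1' with h | h
  · exfalso
    apply h2
    apply interior_mono (Set.setOf_subset_setOf.mpr (fun y hy => le_of_lt hy) :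
      {x : ι → ℝ | l2 x < ∑ i, x i} ⊆ _)
    rw [IsOpen.interior_eq]
    · exact h
    · exact isOpen_lt continuous_l2 (continuous_finset_sum _ (fun i _ => continuous_apply i))
  · exact h

/-- Conversely, if `card ι ≥ 2`, every point with `l2 x = eᵀx` is on the frontier. -/
lemma eq_mem_frontier_D {x : ι → ℝ} (hcard : 2 ≤ Fintype.card ι)
    (hx : l2 x = ∑ i, x i) : x ∈ frontier {x : ι → ℝ | l2 x ≤ ∑ i, x i} := by
  constructor
  · rw [isClosed_D.closure_eq]
    exact le_of_eq hx
  · intro hint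
    rw [mem_interior_iff_mem_nhds, Metric.mem_nhds_iff] at hint
    obtain ⟨ε, hε, hball⟩ := hint
    set δ := ε / 2 with hδ
    have hδ0 : 0 < δ := by positivity
    set y : ι → ℝ := fun i => x i - δ with hy
    have hmem : y ∈ Metric.ball x ε := by
      rw [Metric.mem_ball, dist_pi_lt_iff hε]
      intro i
      rw [hy]
      simp only [Real.dist_eq]
      rw [show x i - δ - x i = -δ by ring, abs_neg, abs_of_pos hδ0]
      linarith
    have hyD := hball hmem
    have hR : (0:ℝ) < Fintype.card ι := by positivity
    have hsqrtR : Real.sqrt (Fintype.card ι) < Fintype.card ι := by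
      have h2 : (2:ℝ) ≤ Fintype.card ι := by exact_mod_cast hcard
      calc Real.sqrt (Fintype.card ι) < Real.sqrt ((Fintype.card ι : ℝ) ^ 2) := by
            apply Real.sqrt_lt_sqrt (by positivity); nlinarith
        _ = Fintype.card ι := Real.sqrt_sq (by positivity)
    -- l2 x ≤ l2 y + δ √card
    have hconst : l2 (fun _ : ι => δ) = δ * Real.sqrt (Fintype.card ι) := by
      rw [l2]
      rw [Finset.sum_const, Finset.card_univ, nsmul_eq_mul]
      rw [show (Fintype.card ι : ℝ) * δ ^ 2 = δ ^ 2 * Fintype.card ι by ring,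
        Real.sqrt_mul (by positivity), Real.sqrt_sq hδ0.le]
    have htri : l2 x ≤ l2 y + δ * Real.sqrt (Fintype.card ι) := by
      have := l2_add_le y (fun _ => δ)
      rw [hconst] at this
      have hxy : (fun i => y i + δ) = x := by funext i; rw [hy]; ring
      rwa [hxy] at this
    have hsumy : ∑ i, y i = (∑ i, x i) - δ * Fintype.card ι := by
      rw [hy]
      rw [Finset.sum_sub_distrib, Finset.sum_const, Finset.card_univ, nsmul_eq_mul]
      ring
    have : l2 y ≤ ∑ i, y i := hyD
    rw [hsumy] at this
    have hlt : δ * Real.sqrt (Fintype.card ι) < δ * Fintype.card ι :=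
      mul_lt_mul_of_pos_left hsqrtR hδ0
    linarith [htri, hx]

end Helpers

section Degenerate

/-- A nonnegative matrix with empty column type satisfies the SSC. -/
lemma SSC_of_isEmpty {n ι : Type*} [Fintype n] [Fintype ι] [DecidableEq ι] [IsEmpty ι]
    (H : Matrix n ι ℝ) (hH : ∀ i j, 0 ≤ H i j) : SSC H := by
  refine ⟨hH, ?_, ?_⟩
  · intro x _
    exact ⟨0, fun i => le_refl 0, funext fun i => isEmptyElim i⟩
  · have hD : {x : ι → ℝ | l2 x ≤ ∑ i, x i} = Set.univ := by
      apply Set.eq_univ_of_forall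
      intro x
      simp [l2, Finset.univ_eq_empty]
    rw [hD, frontier_univ, Set.inter_empty]
    symm
    rw [Set.eq_empty_iff_forall_notMem]
    rintro v ⟨lam, _, k, _⟩
    exact isEmptyElim k

/-- No matrix with a single column satisfies the SSC. -/
lemma not_SSC_card_one {n ι : Type*} [Fintype n] [Fintype ι] [DecidableEq ι]
    (hcard : Fintype.card ι = 1) (H : Matrix n ι ℝ) : ¬ SSC H := by
  rintro ⟨-, -, h2⟩
  obtain ⟨k⟩ : Nonempty ι := Fintype.card_pos_iff.mp (by omega)
  have hall : ∀ i : ι, i = k := by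
    intro i
    exact Fintype.card_le_one_iff.mp (le_of_eq hcard) i k
  set v : ι → ℝ := (1 : ℝ) • (Pi.single k 1 : ι → ℝ) with hv
  have hvmem : v ∈ {v : ι → ℝ | ∃ lam : ℝ, 0 ≤ lam ∧ ∃ k : ι,
      v = lam • (Pi.single k 1 : ι → ℝ)} := ⟨1, zero_le_one, k, rfl⟩
  rw [← h2] at hvmem
  have hfront := hvmem.2
  -- but v is in the interior of D
  have hint : v ∈ interior {x : ι → ℝ | l2 x ≤ ∑ i, x i} := by
    apply interior_mono (show {x : ι → ℝ | 0 < x k} ⊆ _ from ?_)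
    · rw [IsOpen.interior_eq (isOpen_lt continuous_const (continuous_apply k))]
      have : v k = 1 := by rw [hv]; simp
      simp only [Set.mem_setOf_eq, this]
      norm_num
    · intro x hx
      have hsum : ∀ (f : ι → ℝ), ∑ i, f i = f k := by
        intro f
        rw [show (Finset.univ : Finset ι) = {k} from Finset.eq_singleton_iff_unique_mem.mpr
          ⟨Finset.mem_univ k, fun i _ => hall i⟩, Finset.sum_singleton]
      simp only [Set.mem_setOf_eq]
      rw [l2, hsum (fun i => x i ^ 2), hsum x, Real.sqrt_sq_eq_abs,
        abs_of_pos hx]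
  exact hfront.2 hint

end Degenerate

section Slice

variable {α β : Type*} [Fintype α] [Fintype β] [DecidableEq α] [DecidableEq β]

/-- If `x ≥ 0` lies in the cone `C(αβ)`, each slice lies in the cone `C(α)`. -/
lemma slice_in_cone (x : α × β → ℝ) (ha : 1 ≤ Fintype.card α) (hb : 1 ≤ Fintype.card β)
    (hx0 : ∀ p, 0 ≤ x p)
    (hxC : Real.sqrt ((Fintype.card (α × β) : ℝ) - 1) * l2 x ≤ ∑ p, x p) (l : β) :
    Real.sqrt ((Fintype.card α : ℝ) - 1) * l2 (fun k => x (k, l)) ≤ ∑ k, x (k, l) := by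
  by_contra hcon
  push_neg at hcon
  set a : ℝ := (Fintype.card α : ℝ) with hadef
  set b : ℝ := (Fintype.card β : ℝ) with hbdef
  have ha1 : (1 : ℝ) ≤ a := by rw [hadef]; exact_mod_cast ha
  have hb1 : (1 : ℝ) ≤ b := by rw [hbdef]; exact_mod_cast hb
  set N : ℝ := l2 x with hNdef
  set t : β → ℝ := fun j => l2 (fun k => x (k, j)) with htdef
  set sc : β → ℝ := fun j => ∑ k, x (k, j) with hsdef
  have ht0 : ∀ j, 0 ≤ t j := fun j => l2_nonneg _
  have hN0 : 0 ≤ N := l2_nonneg _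
  -- sum decomposition
  have hsum : ∑ p, x p = ∑ j, sc j := by
    simp only [hsdef]
    exact Fintype.sum_prod_type_right x
  have hN2 : N ^ 2 = ∑ j, (t j) ^ 2 := by
    rw [hNdef, l2_sq]
    rw [Fintype.sum_prod_type_right]
    apply Finset.sum_congr rfl
    intro j _
    rw [htdef]
    exact (l2_sq _).symm
  -- each slice sum bounded by √a * t j
  have hslice : ∀ j, sc j ≤ Real.sqrt a * t j := by
    intro j
    have := sum_le_sqrt_card_mul (Finset.univ : Finset α) (fun k => x (k, j))
    simpa [hsdef, htdef, l2, Finset.card_univ] using this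
  -- erase l
  have herase_sq : ∑ j ∈ Finset.univ.erase l, (t j) ^ 2 = N ^ 2 - (t l) ^ 2 := by
    rw [hN2, ← Finset.add_sum_erase _ _ (Finset.mem_univ l)]
    ring
  have htl2 : (t l) ^ 2 ≤ N ^ 2 := by
    rw [hN2, ← Finset.add_sum_erase _ _ (Finset.mem_univ l)]
    have : 0 ≤ ∑ j ∈ Finset.univ.erase l, (t j) ^ 2 :=
      Finset.sum_nonneg fun j _ => sq_nonneg _
    linarith
  have herase : ∑ j ∈ Finset.univ.erase l, t j ≤
      Real.sqrt (b - 1) * Real.sqrt (N ^ 2 - (t l) ^ 2) := by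
    have hcs := sum_le_sqrt_card_mul (Finset.univ.erase l) t
    have hcard' : ((Finset.univ.erase l).card : ℝ) = b - 1 := by
      rw [Finset.card_erase_of_mem (Finset.mem_univ l), Finset.card_univ,
        Nat.cast_sub hb, Nat.cast_one, hbdef]
    rw [hcard', herase_sq] at hcs
    exact hcs
  -- final two-term CS
  have hfinal : Real.sqrt (a - 1) * t l +
      Real.sqrt (a * (b - 1)) * Real.sqrt (N ^ 2 - (t l) ^ 2) ≤
      Real.sqrt (a * b - 1) * N := by
    have h2cs := two_term_CS (Real.sqrt_nonneg (a - 1)) (Real.sqrt_nonneg (a * (b - 1)))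
      (ht0 l) (Real.sqrt_nonneg (N ^ 2 - (t l) ^ 2))
    have e1 : Real.sqrt (a - 1) ^ 2 = a - 1 := Real.sq_sqrt (by linarith)
    have e2 : Real.sqrt (a * (b - 1)) ^ 2 = a * (b - 1) :=
      Real.sq_sqrt (by nlinarith)
    have e3 : Real.sqrt (N ^ 2 - (t l) ^ 2) ^ 2 = N ^ 2 - (t l) ^ 2 :=
      Real.sq_sqrt (by linarith)
    rw [e1, e2, e3] at h2cs
    have e4 : a - 1 + a * (b - 1) = a * b - 1 := by ring
    have e5 : t l ^ 2 + (N ^ 2 - t l ^ 2) = N ^ 2 := by ring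
    rw [e4, e5, Real.sqrt_sq hN0] at h2cs
    exact h2cs
  -- assemble strict chain
  have hchain : ∑ p, x p < Real.sqrt (a * b - 1) * N := by
    calc ∑ p, x p = sc l + ∑ j ∈ Finset.univ.erase l, sc j := by
          rw [hsum, Finset.add_sum_erase _ _ (Finset.mem_univ l)]
      _ < Real.sqrt (a - 1) * t l + ∑ j ∈ Finset.univ.erase l, sc j := by
          apply add_lt_add_left hcon
      _ ≤ Real.sqrt (a - 1) * t l + Real.sqrt a * ∑ j ∈ Finset.univ.erase l, t j := by
          apply add_le_add_right
          rw [Finset.mul_sum]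
          exact Finset.sum_le_sum fun j _ => hslice j
      _ ≤ Real.sqrt (a - 1) * t l +
            Real.sqrt a * (Real.sqrt (b - 1) * Real.sqrt (N ^ 2 - (t l) ^ 2)) := by
          apply add_le_add_right
          exact mul_le_mul_of_nonneg_left herase (Real.sqrt_nonneg a)
      _ = Real.sqrt (a - 1) * t l +
            Real.sqrt (a * (b - 1)) * Real.sqrt (N ^ 2 - (t l) ^ 2) := by
          rw [← mul_assoc, ← Real.sqrt_mul (by linarith)]
      _ ≤ Real.sqrt (a * b - 1) * N := hfinal
  have hcast : ((Fintype.card (α × β) : ℝ)) = a * b := by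
    rw [Fintype.card_prod, hadef, hbdef]; push_cast; ring
  rw [hcast] at hxC
  rw [hNdef] at hchain
  linarith

end Slice

/-- If `U₁` satisfies the SSC and `U₂` is (nonnegative) separable, then their
Kronecker product `U₁ ⊗ U₂` satisfies the SSC. -/
theorem SSC_kronecker_separable {n₁ n₂ r₁ r₂ : ℕ}
    (U₁ : Matrix (Fin n₁) (Fin r₁) ℝ)
    (U₂ : Matrix (Fin n₂) (Fin r₂) ℝ)
    (hU₁ : SSC U₁)
    (hU₂nn : ∀ i j, 0 ≤ U₂ i j) (hU₂sep : Separable U₂) :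
    SSC (U₁ ⊗ₖ U₂) := by
  obtain ⟨hU₁nn, hU₁1, hU₁2⟩ := hU₁
  obtain ⟨K, hKinj, hKoff, hKpos⟩ := hU₂sep
  have hHnn : ∀ (i : Fin n₁ × Fin n₂) (j : Fin r₁ × Fin r₂), 0 ≤ (U₁ ⊗ₖ U₂) i j := by
    intro i j
    exact mul_nonneg (hU₁nn i.1 j.1) (hU₂nn i.2 j.2)
  rcases Nat.lt_or_ge r₁ 2 with hr₁ | hr₁
  · interval_cases r₁
    · haveI : IsEmpty (Fin 0 × Fin r₂) := ⟨fun p => p.1.elim0⟩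
      exact SSC_of_isEmpty _ hHnn
    · exact absurd ⟨hU₁nn, hU₁1, hU₁2⟩ (not_SSC_card_one (by simp) U₁)
  rcases Nat.eq_zero_or_pos r₂ with hr₂ | hr₂
  · subst hr₂
    haveI : IsEmpty (Fin r₁ × Fin 0) := ⟨fun p => p.2.elim0⟩
    exact SSC_of_isEmpty _ hHnn
  -- main case : r₁ ≥ 2, r₂ ≥ 1
  have hcard₁ : Fintype.card (Fin r₁) = r₁ := Fintype.card_fin r₁
  have hcardP : (2:ℕ) ≤ Fintype.card (Fin r₁ × Fin r₂) := by
    rw [Fintype.card_prod, Fintype.card_fin, Fintype.card_fin]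
    nlinarith
  -- the key row computation
  have hrow : ∀ (v : Fin r₁ × Fin r₂ → ℝ) (i : Fin n₁) (j : Fin r₂),
      ((U₁ ⊗ₖ U₂) *ᵥ v) (i, K j) = U₂ (K j) j * ((U₁ *ᵥ fun k => v (k, j)) i) := by
    intro v i j
    simp only [Matrix.mulVec, dotProduct, Matrix.kroneckerMap_apply]
    rw [Fintype.sum_prod_type, Finset.mul_sum]
    apply Finset.sum_congr rfl
    intro k _
    rw [show U₂ (K j) j * (U₁ i k * v (k, j)) =
      U₁ i k * U₂ (K j) j * v (k, j) by ring]
    apply Finset.sum_eq_single j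
    · intro l _ hlj
      rw [hKoff j l (Ne.symm hlj)]
      ring
    · intro h
      exact absurd (Finset.mem_univ j) h
  refine ⟨hHnn, ?_, ?_⟩
  · -- SSC1
    rintro x ⟨hx0, hxC⟩
    have hslices : ∀ l : Fin r₂, ∃ z : Fin n₁ → ℝ, (∀ i, 0 ≤ z i) ∧
        (fun k => x (k, l)) = U₁ᵀ *ᵥ z := by
      intro l
      apply hU₁1
      refine ⟨fun k => hx0 (k, l), ?_⟩
      exact slice_in_cone x (by omega) (by simp; omega) hx0 hxC l
    choose z hz0 hzx using hslices
    refine ⟨fun p => ∑ l, if p.2 = K l then z l p.1 / U₂ (K l) l else 0, ?_, ?_⟩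
    · intro p
      apply Finset.sum_nonneg
      intro l _
      split
      · exact div_nonneg (hz0 l p.1) (hKpos l).le
      · exact le_refl 0
    · funext p
      obtain ⟨k, j⟩ := p
      simp only [Matrix.mulVec, dotProduct, Matrix.transpose_apply,
        Matrix.kroneckerMap_apply]
      rw [Fintype.sum_prod_type]
      have hinner : ∀ i : Fin n₁,
          ∑ m : Fin n₂, U₁ i k * U₂ m j * (∑ l, if m = K l then z l i / U₂ (K l) l else 0)
            = U₁ i k * z j i := by
        intro i
        have swap : ∀ m : Fin n₂,
            U₁ i k * U₂ m j * (∑ l, if m = K l then z l i / U₂ (K l) l else 0)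
              = ∑ l, if m = K l then U₁ i k * U₂ m j * (z l i / U₂ (K l) l) else 0 := by
          intro m
          rw [Finset.mul_sum]
          apply Finset.sum_congr rfl
          intro l _
          split <;> ring
        simp only [swap]
        rw [Finset.sum_comm]
        have hml : ∀ l : Fin r₂,
            (∑ m : Fin n₂, if m = K l then U₁ i k * U₂ m j * (z l i / U₂ (K l) l) else 0)
              = U₁ i k * U₂ (K l) j * (z l i / U₂ (K l) l) := by
          intro l
          rw [Finset.sum_ite_eq' Finset.univ (K l)
            (fun m => U₁ i k * U₂ m j * (z l i / U₂ (K l) l))]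
          simp
        simp only [hml]
        rw [Finset.sum_eq_single j]
        · have hd : U₂ (K j) j ≠ 0 := ne_of_gt (hKpos j)
          field_simp
        · intro l _ hlj
          rw [hKoff l j hlj]
          ring
        · intro h
          exact absurd (Finset.mem_univ j) h
      calc x (k, j) = (U₁ᵀ *ᵥ z j) k := congrFun (hzx j) k
        _ = ∑ i, U₁ i k * z j i := by
            simp [Matrix.mulVec, dotProduct, Matrix.transpose_apply]
        _ = _ := by
            apply Finset.sum_congr rfl
            intro i _
            exact (hinner i).symm
  · -- SSC2
    ext v
    simp only [Set.mem_inter_iff, Set.mem_setOf_eq]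
    constructor
    · rintro ⟨hv1, hv2⟩
      have heq : l2 v = ∑ p, v p := frontier_D_eq hv2
      set w : Fin r₂ → (Fin r₁ → ℝ) := fun j k => v (k, j) with hw
      have hUw : ∀ j i, 0 ≤ (U₁ *ᵥ w j) i := by
        intro j i
        have h := hv1 (i, K j)
        rw [hrow v i j] at h
        by_contra hX
        push_neg at hX
        nlinarith [mul_pos (hKpos j) (neg_pos.mpr hX)]
      have hdual : ∀ j, l2 (w j) ≤ ∑ k, w j k := by
        intro j
        apply dual_of_cone (by rw [hcard₁]; omega)
        intro xx hxx0 hxxC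
        obtain ⟨y, hy0, hyx⟩ := hU₁1 ⟨hxx0, hxxC⟩
        rw [hyx]
        have expand : ∑ k, (U₁ᵀ *ᵥ y) k * w j k = ∑ i, y i * ∑ k, U₁ i k * w j k := by
          simp only [Matrix.mulVec, dotProduct, Matrix.transpose_apply,
            Finset.sum_mul]
          rw [Finset.sum_comm]
          apply Finset.sum_congr rfl
          intro i _
          rw [Finset.mul_sum]
          apply Finset.sum_congr rfl
          intro k _
          ring
        rw [expand]
        apply Finset.sum_nonneg
        intro i _
        apply mul_nonneg (hy0 i)
        have := hUw j i
        simpa [Matrix.mulVec, dotProduct] using this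
      set sc : Fin r₂ → ℝ := fun j => ∑ k, w j k with hsc
      set t : Fin r₂ → ℝ := fun j => l2 (w j) with ht
      have ht0 : ∀ j, 0 ≤ t j := fun j => l2_nonneg _
      have hts : ∀ j, t j ≤ sc j := hdual
      have hs0 : ∀ j, 0 ≤ sc j := fun j => le_trans (ht0 j) (hts j)
      set S : ℝ := ∑ j, sc j with hS
      have hSsum : l2 v = S := by
        rw [heq, hS]
        exact Fintype.sum_prod_type_right v
      have hN2 : S ^ 2 = ∑ j, (t j) ^ 2 := by
        rw [← hSsum, l2_sq, Fintype.sum_prod_type_right]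
        apply Finset.sum_congr rfl
        intro j _
        rw [ht]
        exact (l2_sq (w j)).symm
      have htsq : ∀ j, t j ^ 2 ≤ sc j ^ 2 := fun j =>
        pow_le_pow_left₀ (ht0 j) (hts j) 2
      have hsum_sq : ∑ j, t j ^ 2 ≤ ∑ j, sc j ^ 2 :=
        Finset.sum_le_sum fun j _ => htsq j
      have hkey : ∑ j, sc j * (S - sc j) = S ^ 2 - ∑ j, sc j ^ 2 := by
        have e : ∀ j, sc j * (S - sc j) = sc j * S - sc j ^ 2 := fun j => by ring
        simp only [e]
        rw [Finset.sum_sub_distrib, ← Finset.sum_mul, ← hS]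
        ring
      have hterm0 : ∀ j, 0 ≤ sc j * (S - sc j) := by
        intro j
        apply mul_nonneg (hs0 j)
        have : S - sc j = ∑ j' ∈ Finset.univ.erase j, sc j' := by
          rw [hS, ← Finset.add_sum_erase _ _ (Finset.mem_univ j)]
          ring
        rw [this]
        exact Finset.sum_nonneg fun j' _ => hs0 j'
      have hkey0 : ∑ j, sc j * (S - sc j) = 0 := by
        have hle : ∑ j, sc j * (S - sc j) ≤ 0 := by
          rw [hkey]
          nlinarith [hN2, hsum_sq]
        have hge : 0 ≤ ∑ j, sc j * (S - sc j) :=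
          Finset.sum_nonneg fun j _ => hterm0 j
        linarith
      have hterm : ∀ j, sc j * (S - sc j) = 0 := by
        intro j
        have := (Finset.sum_eq_zero_iff_of_nonneg (fun j _ => hterm0 j)).mp hkey0
        exact this j (Finset.mem_univ j)
      have hteq : ∀ j, t j = sc j := by
        have hsq_eq : ∑ j, sc j ^ 2 - ∑ j, t j ^ 2 = 0 := by
          rw [hkey] at hkey0
          linarith [hN2]
        have : ∑ j, (sc j ^ 2 - t j ^ 2) = 0 := by
          rw [Finset.sum_sub_distrib]
          exact hsq_eq
        have hz := (Finset.sum_eq_zero_iff_of_nonneg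
          (fun j _ => by linarith [htsq j])).mp this
        intro j
        have h1 : t j ^ 2 = sc j ^ 2 := by
          have := hz j (Finset.mem_univ j)
          linarith
        calc t j = Real.sqrt (t j ^ 2) := (Real.sqrt_sq (ht0 j)).symm
          _ = Real.sqrt (sc j ^ 2) := by rw [h1]
          _ = sc j := Real.sqrt_sq (hs0 j)
      by_cases hall : ∀ j, sc j = 0
      · -- v = 0
        have hv0 : v = 0 := by
          funext p
          obtain ⟨k, j⟩ := p
          have h0 : t j = 0 := by rw [hteq j, hall j]
          have : w j = 0 := l2_eq_zero h0
          exact congrFun this k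
        exact ⟨0, le_refl 0, (⟨0, by omega⟩, ⟨0, by omega⟩), by rw [hv0]; simp⟩
      · push_neg at hall
        obtain ⟨j₀, hj₀⟩ := hall
        have hj₀pos : 0 < sc j₀ := lt_of_le_of_ne (hs0 j₀) (Ne.symm hj₀)
        have hSj₀ : S = sc j₀ := by
          have := hterm j₀
          rcases mul_eq_zero.mp this with h | h
          · exact absurd h hj₀
          · linarith
        have hrest : ∀ j, j ≠ j₀ → sc j = 0 := by
          intro j hj
          have hsplit : S = sc j₀ + ∑ j' ∈ Finset.univ.erase j₀, sc j' := by
            rw [hS, Finset.add_sum_erase _ _ (Finset.mem_univ j₀)]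
          have hz : ∑ j' ∈ Finset.univ.erase j₀, sc j' = 0 := by
            rw [hSj₀] at hsplit
            linarith
          have := (Finset.sum_eq_zero_iff_of_nonneg
            (fun j' _ => hs0 j')).mp hz j (Finset.mem_erase.mpr ⟨hj, Finset.mem_univ j⟩)
          exact this
        have hwrest : ∀ j, j ≠ j₀ → w j = 0 := by
          intro j hj
          have h0 : t j = 0 := by rw [hteq j, hrest j hj]
          exact l2_eq_zero h0
        have hfront₀ : w j₀ ∈ frontier {x : Fin r₁ → ℝ | l2 x ≤ ∑ i, x i} := by
          apply eq_mem_frontier_D (by rw [hcard₁]; omega)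
          exact hteq j₀
        have hmem : w j₀ ∈ ({y : Fin r₁ → ℝ | ∀ i, 0 ≤ (U₁ *ᵥ y) i} ∩
            frontier {x : Fin r₁ → ℝ | l2 x ≤ ∑ i, x i}) :=
          ⟨hUw j₀, hfront₀⟩
        rw [hU₁2] at hmem
        obtain ⟨lam, hlam, k₀, hk₀⟩ := hmem
        refine ⟨lam, hlam, (k₀, j₀), ?_⟩
        funext p
        obtain ⟨k, j⟩ := p
        by_cases hj : j = j₀
        · subst hj
          have h1 : v (k, j) = w j k := rfl
          have h2 : w j k = lam * (Pi.single k₀ 1 : Fin r₁ → ℝ) k := by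
            rw [hk₀]; rfl
          rw [h1, h2]
          simp only [Pi.smul_apply, smul_eq_mul, Pi.single_apply, Prod.mk.injEq]
          by_cases hk : k = k₀ <;> simp [hk]
        · have h1 : v (k, j) = w j k := rfl
          rw [h1, hwrest j hj]
          simp only [Pi.zero_apply, Pi.smul_apply, smul_eq_mul, Pi.single_apply,
            Prod.mk.injEq]
          simp [hj]
    · rintro ⟨lam, hlam, ⟨k₀, l₀⟩, rfl⟩
      constructor
      · intro p
        have hmv : ((U₁ ⊗ₖ U₂) *ᵥ
            (lam • (Pi.single (k₀, l₀) 1 : Fin r₁ × Fin r₂ → ℝ))) p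
            = lam * (U₁ ⊗ₖ U₂) p (k₀, l₀) := by
          simp only [Matrix.mulVec, dotProduct, Pi.smul_apply, smul_eq_mul,
            Pi.single_apply]
          rw [Finset.sum_congr rfl (fun q _ => show
            (U₁ ⊗ₖ U₂) p q * (lam * if q = (k₀, l₀) then 1 else 0)
              = if q = (k₀, l₀) then lam * (U₁ ⊗ₖ U₂) p q else 0 by
            split <;> ring)]
          rw [Finset.sum_ite_eq' Finset.univ (k₀, l₀)
            (fun q => lam * (U₁ ⊗ₖ U₂) p q)]
          simp
        rw [hmv]
        exact mul_nonneg hlam (hHnn p _)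
      · apply eq_mem_frontier_D hcardP
        have hsum : ∑ p, (lam • (Pi.single (k₀, l₀) 1 : Fin r₁ × Fin r₂ → ℝ)) p
            = lam := by
          simp only [Pi.smul_apply, smul_eq_mul, Pi.single_apply]
          rw [Finset.sum_congr rfl (fun q _ => show
            lam * (if q = (k₀, l₀) then (1:ℝ) else 0)
              = if q = (k₀, l₀) then lam else 0 by split <;> ring)]
          rw [Finset.sum_ite_eq' Finset.univ (k₀, l₀) (fun _ => lam)]
          simp
        have hl2 : l2 (lam • (Pi.single (k₀, l₀) 1 : Fin r₁ × Fin r₂ → ℝ)) = lam := by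
          rw [l2]
          have : ∀ q : Fin r₁ × Fin r₂,
              ((lam • (Pi.single (k₀, l₀) 1 : Fin r₁ × Fin r₂ → ℝ)) q) ^ 2
                = if q = (k₀, l₀) then lam ^ 2 else 0 := by
            intro q
            simp only [Pi.smul_apply, smul_eq_mul, Pi.single_apply]
            split <;> ring
          simp only [this]
          rw [Finset.sum_ite_eq' Finset.univ (k₀, l₀) (fun _ => lam ^ 2)]
          simp only [Finset.mem_univ, if_true]
          exact Real.sqrt_sq hlam
        rw [hl2, hsum]
end

section
/- Let T ∈ ℝ^{n₁×…×n_d} be an order-d tensor with T = (U₁#,…,U_d#).G# where each U_i# ∈ ℝ_+^{n_i×r_i} is separable with entries in [0,1] and column sums appropriately normalized, and suppose for every k ∈ [d] the mode-k unfolding T₍ₖ₎ has rank r_k. Then for any other decomposition T = (U₁*,…,U_d*).G* with all U_i* separable, there exist permutation matrices Π_i such that U_i* = U_i# Π_i for all i and G* = (Π₁^T,…,Π_d^T).G#. -/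
open Matrix

/-- The Tucker multilinear action of the matrices `U k` on an order-`d`
core tensor `G`. -/
noncomputable def tucker {d : ℕ} {m r : Fin d → ℕ}
    (U : ∀ k, Matrix (Fin (m k)) (Fin (r k)) ℝ)
    (G : (∀ k, Fin (r k)) → ℝ) : (∀ k, Fin (m k)) → ℝ :=
  fun j => ∑ i : ∀ k, Fin (r k), (∏ k, U k (j k) (i k)) * G i

/-- The mode-`k` unfolding of an order-`d` tensor, a matrix whose rows are
indexed by the remaining modes and whose columns by mode `k`. -/
def unfoldMode {d : ℕ} {m : Fin d → ℕ}
    (T : (∀ k, Fin (m k)) → ℝ) (k : Fin d) :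
    Matrix (∀ j : {j : Fin d // j ≠ k}, Fin (m j.1)) (Fin (m k)) ℝ :=
  fun rest i =>
    T (fun j => if h : j = k then Fin.cast (congrArg m h).symm i else rest ⟨j, h⟩)

namespace NTDAux

variable {d : ℕ}

/-- Glue a mode-`k` index and the remaining indices into a full multi-index. -/
def glue {r : Fin d → ℕ} (k : Fin d) (a : Fin (r k))
    (ir : ∀ j : {j : Fin d // j ≠ k}, Fin (r j.1)) : ∀ j, Fin (r j) :=
  fun j => if h : j = k then Fin.cast (congrArg r h).symm a else ir ⟨j, h⟩

@[simp] lemma glue_self {r : Fin d → ℕ} (k : Fin d) (a : Fin (r k)) (ir) :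
    glue (r := r) k a ir k = a := by
  simp [glue]

@[simp] lemma glue_ne {r : Fin d → ℕ} (k : Fin d) (a : Fin (r k)) (ir) (j : Fin d)
    (h : j ≠ k) : glue (r := r) k a ir j = ir ⟨j, h⟩ := by
  simp [glue, h]

/-- The equivalence splitting a multi-index into the mode-`k` part and the rest. -/
def glueEquiv {r : Fin d → ℕ} (k : Fin d) :
    (Fin (r k) × ∀ j : {j : Fin d // j ≠ k}, Fin (r j.1)) ≃ (∀ j, Fin (r j)) where
  toFun p := glue k p.1 p.2
  invFun i := (i k, fun j => i j.1)
  left_inv p := by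
    obtain ⟨a, ir⟩ := p
    refine Prod.ext ?_ ?_
    · simp
    · funext j
      exact glue_ne k a ir j.1 j.2
  right_inv i := by
    funext j
    by_cases h : j = k
    · subst h; simp
    · show glue k (i k) (fun j => i j.1) j = i j
      rw [glue_ne _ _ _ _ h]

lemma prod_split {M : Type*} [CommMonoid M] (k : Fin d) (f : Fin d → M) :
    ∏ j, f j = f k * ∏ j : {j : Fin d // j ≠ k}, f j.1 := by
  rw [Fintype.prod_eq_mul_prod_compl k]
  congr 1
  have h : ∀ x : Fin d, x ∈ ({k}ᶜ : Finset (Fin d)) ↔ x ≠ k := by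
    intro x; simp
  exact Finset.prod_subtype _ h f

/-- The matrix of "partial contractions" so that the mode-`k` unfolding of a
Tucker product factors as `coreMat U G k * (U k)ᵀ`. -/
noncomputable def coreMat {n r : Fin d → ℕ} (U : ∀ k, Matrix (Fin (n k)) (Fin (r k)) ℝ)
    (G : (∀ k, Fin (r k)) → ℝ) (k : Fin d) :
    Matrix (∀ j : {j : Fin d // j ≠ k}, Fin (n j.1)) (Fin (r k)) ℝ :=
  fun rest a => ∑ ir : ∀ j : {j : Fin d // j ≠ k}, Fin (r j.1),
    (∏ j : {j : Fin d // j ≠ k}, U j.1 (rest j) (ir j)) * G (glue k a ir)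

lemma unfold_tucker {n r : Fin d → ℕ} (U : ∀ k, Matrix (Fin (n k)) (Fin (r k)) ℝ)
    (G : (∀ k, Fin (r k)) → ℝ) (k : Fin d) :
    unfoldMode (tucker U G) k = coreMat U G k * (U k)ᵀ := by
  ext rest c
  show tucker U G (glue k c rest) = _
  calc tucker U G (glue k c rest)
      = ∑ i : ∀ j, Fin (r j), (∏ j, U j (glue k c rest j) (i j)) * G i := rfl
    _ = ∑ p : Fin (r k) × ∀ j : {j : Fin d // j ≠ k}, Fin (r j.1),
          (∏ j, U j (glue k c rest j) (glueEquiv k p j)) * G (glueEquiv k p) :=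
        (Equiv.sum_comp (glueEquiv k) _).symm
    _ = ∑ a : Fin (r k), ∑ ir : ∀ j : {j : Fin d // j ≠ k}, Fin (r j.1),
          (∏ j, U j (glue k c rest j) (glue k a ir j)) * G (glue k a ir) :=
        Fintype.sum_prod_type _
    _ = ∑ a : Fin (r k), ∑ ir : ∀ j : {j : Fin d // j ≠ k}, Fin (r j.1),
          U k c a * ((∏ j : {j : Fin d // j ≠ k}, U j.1 (rest j) (ir j)) * G (glue k a ir)) := by
        refine Finset.sum_congr rfl fun a _ => Finset.sum_congr rfl fun ir _ => ?_
        rw [prod_split k (fun j => U j (glue k c rest j) (glue k a ir j))]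
        have hp : (∏ j : {j : Fin d // j ≠ k}, U j.1 (glue k c rest j.1) (glue k a ir j.1))
            = ∏ j : {j : Fin d // j ≠ k}, U j.1 (rest j) (ir j) :=
          Finset.prod_congr rfl fun j _ => by
            rw [glue_ne _ _ _ _ j.2, glue_ne _ _ _ _ j.2]
        rw [glue_self, glue_self, hp, mul_assoc]
    _ = (coreMat U G k * (U k)ᵀ) rest c := by
        rw [Matrix.mul_apply]
        simp only [coreMat, transpose_apply, Finset.sum_mul]
        exact Finset.sum_congr rfl fun a _ => Finset.sum_congr rfl fun ir _ => by ring

set_option maxHeartbeats 1000000 in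
lemma tucker_tucker {m p q : Fin d → ℕ} (A : ∀ k, Matrix (Fin (m k)) (Fin (p k)) ℝ)
    (B : ∀ k, Matrix (Fin (p k)) (Fin (q k)) ℝ) (G : (∀ k, Fin (q k)) → ℝ) :
    tucker A (tucker B G) = tucker (fun k => A k * B k) G := by
  funext j
  simp only [tucker]
  calc ∑ i : ∀ k, Fin (p k), (∏ k, A k (j k) (i k)) * ∑ l : ∀ k, Fin (q k), (∏ k, B k (i k) (l k)) * G l
      = ∑ i : ∀ k, Fin (p k), ∑ l : ∀ k, Fin (q k),
          ((∏ k, A k (j k) (i k)) * ∏ k, B k (i k) (l k)) * G l := by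
        refine Finset.sum_congr rfl fun i _ => ?_
        rw [Finset.mul_sum]
        exact Finset.sum_congr rfl fun l _ => by ring
    _ = ∑ l : ∀ k, Fin (q k), ∑ i : ∀ k, Fin (p k),
          ((∏ k, A k (j k) (i k)) * ∏ k, B k (i k) (l k)) * G l := Finset.sum_comm
    _ = ∑ l : ∀ k, Fin (q k), (∏ k, (A k * B k) (j k) (l k)) * G l := by
        refine Finset.sum_congr rfl fun l _ => ?_
        rw [← Finset.sum_mul]
        congr 1
        calc ∑ i : ∀ k, Fin (p k), ((∏ k, A k (j k) (i k)) * ∏ k, B k (i k) (l k))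
            = ∑ i : ∀ k, Fin (p k), ∏ k, (A k (j k) (i k) * B k (i k) (l k)) :=
              Finset.sum_congr rfl fun i _ => Finset.prod_mul_distrib.symm
          _ = ∏ k, ∑ a : Fin (p k), A k (j k) a * B k a (l k) :=
              (Fintype.prod_sum (fun k a => A k (j k) a * B k a (l k))).symm
          _ = ∏ k, (A k * B k) (j k) (l k) :=
              Finset.prod_congr rfl fun k _ => (Matrix.mul_apply).symm

lemma tucker_one {q : Fin d → ℕ} (G : (∀ k, Fin (q k)) → ℝ) :
    tucker (fun k => (1 : Matrix (Fin (q k)) (Fin (q k)) ℝ)) G = G := by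
  funext j
  show ∑ i : ∀ k, Fin (q k), (∏ k, (1 : Matrix (Fin (q k)) (Fin (q k)) ℝ) (j k) (i k)) * G i = G j
  rw [Finset.sum_eq_single j]
  · simp
  · intro i _ hne
    obtain ⟨k, hk⟩ : ∃ k, j k ≠ i k := by
      by_contra h; push_neg at h; exact hne (funext fun k => (h k).symm)
    have hz : (∏ k, (1 : Matrix (Fin (q k)) (Fin (q k)) ℝ) (j k) (i k)) = 0 :=
      Finset.prod_eq_zero (Finset.mem_univ k) (Matrix.one_apply_ne hk)
    rw [hz, zero_mul]
  · intro h; exact absurd (Finset.mem_univ j) h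

lemma exists_left_inverse {m r : Type*} [Fintype m] [Fintype r] [DecidableEq r] [DecidableEq m]
    (A : Matrix m r ℝ) (h : A.rank = Fintype.card r) : ∃ L : Matrix r m ℝ, L * A = 1 := by
  have hker : LinearMap.ker A.mulVecLin = ⊥ := by
    have h1 := LinearMap.finrank_range_add_finrank_ker A.mulVecLin
    rw [Module.finrank_fintype_fun_eq_card] at h1
    have h2 : Module.finrank ℝ (LinearMap.range A.mulVecLin) = Fintype.card r := h
    rw [h2] at h1
    have h3 : Module.finrank ℝ (LinearMap.ker A.mulVecLin) = 0 := by omega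
    rwa [Submodule.finrank_eq_zero] at h3
  obtain ⟨g, hg⟩ := LinearMap.exists_leftInverse_of_injective A.mulVecLin hker
  refine ⟨LinearMap.toMatrix' g, ?_⟩
  calc LinearMap.toMatrix' g * A
      = LinearMap.toMatrix' g * LinearMap.toMatrix' (Matrix.toLin' A) := by
        rw [LinearMap.toMatrix'_toLin']
    _ = LinearMap.toMatrix' (g ∘ₗ Matrix.toLin' A) := (LinearMap.toMatrix'_comp _ _).symm
    _ = 1 := by rw [Matrix.toLin'_apply', hg, LinearMap.toMatrix'_id]

lemma exists_factor {m n r : Type*} [Fintype m] [Fintype n] [Fintype r] [DecidableEq r]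
    (M N : Matrix m r ℝ) (U V : Matrix n r ℝ)
    (h : M * Uᵀ = N * Vᵀ) (hr : (M * Uᵀ).rank = Fintype.card r) :
    ∃ B : Matrix r r ℝ, V = U * B := by
  have hN : N.rank = Fintype.card r := le_antisymm (Matrix.rank_le_card_width N) (by
    rw [← hr, h]; exact Matrix.rank_mul_le_left N Vᵀ)
  have hNt : Nᵀ.rank = Fintype.card r := by rw [Matrix.rank_transpose]; exact hN
  have htop : LinearMap.range (Nᵀ).mulVecLin = ⊤ := by
    apply Submodule.eq_top_of_finrank_eq
    rw [Module.finrank_fintype_fun_eq_card]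
    exact hNt
  have hsurj : ∀ y : r → ℝ, ∃ x : m → ℝ, Nᵀ.mulVec x = y := by
    intro y
    have hy : y ∈ LinearMap.range (Nᵀ).mulVecLin := htop ▸ Submodule.mem_top
    obtain ⟨x, hx⟩ := hy
    exact ⟨x, hx⟩
  choose x hx using fun j => hsurj (Pi.single j 1)
  refine ⟨Matrix.of fun a jc => Mᵀ.mulVec (x jc) a, ?_⟩
  have hT : U * Mᵀ = V * Nᵀ := by
    have h2 := congrArg Matrix.transpose h
    simpa [Matrix.transpose_mul] using h2
  ext i jc
  symm
  calc (U * Matrix.of fun a jc => Mᵀ.mulVec (x jc) a) i jc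
      = (U.mulVec (Mᵀ.mulVec (x jc))) i := by
        simp [Matrix.mul_apply, Matrix.mulVec, dotProduct]
    _ = ((U * Mᵀ).mulVec (x jc)) i := by rw [Matrix.mulVec_mulVec]
    _ = ((V * Nᵀ).mulVec (x jc)) i := by rw [hT]
    _ = (V.mulVec (Nᵀ.mulVec (x jc))) i := by rw [Matrix.mulVec_mulVec]
    _ = (V.mulVec (Pi.single jc 1)) i := by rw [hx]
    _ = V i jc := by rw [Matrix.mulVec_single]; exact mul_one _

lemma perm_of_nonneg_inv {r : Type*} [Fintype r] [DecidableEq r]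
    (B C : Matrix r r ℝ)
    (hB : ∀ i j, 0 ≤ B i j) (hC : ∀ i j, 0 ≤ C i j)
    (hBC : B * C = 1) (hCB : C * B = 1)
    (hcol : ∀ j, ∑ i, B i j = 1) :
    ∃ σ : Equiv.Perm r, B = σ.permMatrix ℝ := by
  have hex : ∀ i, ∃ a, 0 < B i a ∧ 0 < C a i := by
    intro i
    have h1 : ∑ a, B i a * C a i = 1 := by
      have := congrFun (congrFun hBC i) i
      rwa [Matrix.mul_apply, Matrix.one_apply_eq] at this
    have h2 : ∃ a, B i a * C a i ≠ 0 := by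
      by_contra hcon
      push_neg at hcon
      rw [Finset.sum_congr rfl (fun a _ => hcon a), Finset.sum_const_zero] at h1
      exact one_ne_zero h1.symm
    obtain ⟨a, ha⟩ := h2
    refine ⟨a, ?_, ?_⟩
    · rcases lt_or_eq_of_le (hB i a) with h | h
      · exact h
      · exact absurd (by rw [← h, zero_mul]) ha
    · rcases lt_or_eq_of_le (hC a i) with h | h
      · exact h
      · exact absurd (by rw [← h, mul_zero]) ha
  choose f hfB hfC using hex
  have hzero : ∀ (i j : r), i ≠ j → ∀ a, B i a * C a j = 0 := by
    intro i j hij a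
    have h0 : ∑ b, B i b * C b j = 0 := by
      have := congrFun (congrFun hBC i) j
      rwa [Matrix.mul_apply, Matrix.one_apply_ne hij] at this
    have := (Finset.sum_eq_zero_iff_of_nonneg
      (fun b _ => mul_nonneg (hB i b) (hC b j))).mp h0
    exact this a (Finset.mem_univ a)
  have hzero' : ∀ (a b : r), a ≠ b → ∀ j, C a j * B j b = 0 := by
    intro a b hab j
    have h0 : ∑ c, C a c * B c b = 0 := by
      have := congrFun (congrFun hCB a) b
      rwa [Matrix.mul_apply, Matrix.one_apply_ne hab] at this
    have := (Finset.sum_eq_zero_iff_of_nonneg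
      (fun c _ => mul_nonneg (hC a c) (hB c b))).mp h0
    exact this j (Finset.mem_univ j)
  have claimC : ∀ i j, j ≠ i → C (f i) j = 0 := by
    intro i j hji
    have := hzero i j (fun h => hji h.symm) (f i)
    rcases mul_eq_zero.mp this with h | h
    · exact absurd h (ne_of_gt (hfB i))
    · exact h
  have claimB : ∀ i a, a ≠ f i → B i a = 0 := by
    intro i a haf
    have := hzero' (f i) a (fun h => haf h.symm) i
    rcases mul_eq_zero.mp this with h | h
    · exact absurd h (ne_of_gt (hfC i))
    · exact h
  have hfinj : Function.Injective f := by
    intro i₁ i₂ hf12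
    by_contra hne
    have h1 : C (f i₁) i₂ = 0 := claimC i₁ i₂ (fun h => hne h.symm)
    rw [hf12] at h1
    exact absurd h1 (ne_of_gt (hfC i₂))
  have hfbij := Finite.injective_iff_bijective.mp hfinj
  refine ⟨Equiv.ofBijective f hfbij, ?_⟩
  have hone : ∀ i, B i (f i) = 1 := by
    intro i
    have := hcol (f i)
    rwa [Finset.sum_eq_single i (fun b _ hb => claimB b (f i)
      (fun h => hb (hfinj h.symm)))
      (fun h => absurd (Finset.mem_univ i) h)] at this
  ext i j
  show B i j = (Equiv.ofBijective f hfbij).toPEquiv.toMatrix i j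
  rw [PEquiv.toMatrix_apply, Equiv.toPEquiv_apply]
  simp only [Equiv.ofBijective_apply, Option.mem_def, Option.some.injEq]
  by_cases h : f i = j
  · subst h
    rw [if_pos rfl]
    exact hone i
  · rw [if_neg h]
    exact claimB i j (fun hh => h hh.symm)

lemma permMatrix_transpose_mul {r : Type*} [Fintype r] [DecidableEq r] (σ : Equiv.Perm r) :
    (σ.permMatrix ℝ)ᵀ * σ.permMatrix ℝ = 1 := by
  show (σ.toPEquiv.toMatrix)ᵀ * σ.toPEquiv.toMatrix = (1 : Matrix r r ℝ)
  rw [← PEquiv.toMatrix_symm, ← PEquiv.toMatrix_trans, ← Equiv.toPEquiv_symm,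
    ← Equiv.toPEquiv_trans]
  simp

end NTDAux

open NTDAux

/-- Identifiability of order-`d` NTD under separability (generalization of
Proposition 1 of Agterberg--Zhang): if all factors of both decompositions are
separable with entries in `[0,1]` and unit column sums, and every mode-`k`
unfolding of the tensor has rank `r k`, then the two decompositions coincide
up to permutations of the columns of each factor. -/
theorem separable_NTD_identifiable {d : ℕ} {n r : Fin d → ℕ}
    (U Ustar : ∀ k, Matrix (Fin (n k)) (Fin (r k)) ℝ)
    (G Gstar : (∀ k, Fin (r k)) → ℝ)
    (hU01 : ∀ k i j, U k i j ∈ Set.Icc (0 : ℝ) 1)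
    (hUstar01 : ∀ k i j, Ustar k i j ∈ Set.Icc (0 : ℝ) 1)
    (hUnorm : ∀ k j, ∑ i, U k i j = 1)
    (hUstarnorm : ∀ k j, ∑ i, Ustar k i j = 1)
    (hUsep : ∀ k, Separable (U k))
    (hUstarsep : ∀ k, Separable (Ustar k))
    (hrank : ∀ k, (unfoldMode (tucker U G) k).rank = r k)
    (heq : tucker U G = tucker Ustar Gstar) :
    ∃ σ : ∀ k, Equiv.Perm (Fin (r k)),
      (∀ k, Ustar k = U k * (σ k).permMatrix ℝ) ∧
      Gstar = tucker (fun k => ((σ k).permMatrix ℝ)ᵀ) G := by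
  -- Unfolding factorizations
  have hfac1 : ∀ k, unfoldMode (tucker U G) k = coreMat U G k * (U k)ᵀ :=
    fun k => unfold_tucker U G k
  have hfac2 : ∀ k, unfoldMode (tucker U G) k = coreMat Ustar Gstar k * (Ustar k)ᵀ := by
    intro k; rw [heq]; exact unfold_tucker Ustar Gstar k
  have hMU : ∀ k, coreMat U G k * (U k)ᵀ = coreMat Ustar Gstar k * (Ustar k)ᵀ :=
    fun k => (hfac1 k).symm.trans (hfac2 k)
  have hrk : ∀ k, (coreMat U G k * (U k)ᵀ).rank = Fintype.card (Fin (r k)) := by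
    intro k; rw [← hfac1 k, hrank k, Fintype.card_fin]
  have hrk' : ∀ k, (coreMat Ustar Gstar k * (Ustar k)ᵀ).rank = Fintype.card (Fin (r k)) := by
    intro k; rw [← hMU k]; exact hrk k
  -- Full column rank of the factors
  have hUrank : ∀ k, (U k).rank = Fintype.card (Fin (r k)) := by
    intro k
    refine le_antisymm (Matrix.rank_le_card_width (U k)) ?_
    calc Fintype.card (Fin (r k)) = (coreMat U G k * (U k)ᵀ).rank := (hrk k).symm
      _ ≤ ((U k)ᵀ).rank := Matrix.rank_mul_le_right _ _
      _ = (U k).rank := Matrix.rank_transpose (U k)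
  have hUstarrank : ∀ k, (Ustar k).rank = Fintype.card (Fin (r k)) := by
    intro k
    refine le_antisymm (Matrix.rank_le_card_width (Ustar k)) ?_
    calc Fintype.card (Fin (r k)) = (coreMat Ustar Gstar k * (Ustar k)ᵀ).rank := (hrk' k).symm
      _ ≤ ((Ustar k)ᵀ).rank := Matrix.rank_mul_le_right _ _
      _ = (Ustar k).rank := Matrix.rank_transpose (Ustar k)
  -- Left inverses
  choose L hL using fun k => exists_left_inverse (U k) (hUrank k)
  choose L' hL' using fun k => exists_left_inverse (Ustar k) (hUstarrank k)
  -- Key step: the change-of-basis matrices are permutation matrices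
  have key : ∀ k, ∃ σk : Equiv.Perm (Fin (r k)), Ustar k = U k * σk.permMatrix ℝ := by
    intro k
    obtain ⟨B, hB⟩ := exists_factor (coreMat U G k) (coreMat Ustar Gstar k)
      (U k) (Ustar k) (hMU k) (hrk k)
    obtain ⟨B', hB'⟩ := exists_factor (coreMat Ustar Gstar k) (coreMat U G k)
      (Ustar k) (U k) (hMU k).symm (hrk' k)
    have hBB' : B * B' = 1 := by
      have h1 : U k = U k * (B * B') := by
        rw [← Matrix.mul_assoc, ← hB, ← hB']
      have h2 : L k * U k = L k * (U k * (B * B')) := congrArg (L k * ·) h1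
      rw [hL k, ← Matrix.mul_assoc, hL k, Matrix.one_mul] at h2
      exact h2.symm
    have hB'B : B' * B = 1 := by
      have h1 : Ustar k = Ustar k * (B' * B) := by
        rw [← Matrix.mul_assoc, ← hB', ← hB]
      have h2 : L' k * Ustar k = L' k * (Ustar k * (B' * B)) := congrArg (L' k * ·) h1
      rw [hL' k, ← Matrix.mul_assoc, hL' k, Matrix.one_mul] at h2
      exact h2.symm
    -- nonnegativity of B via separability of U k
    obtain ⟨K, hKinj, hK0, hKpos⟩ := hUsep k
    have hBnn : ∀ a j, 0 ≤ B a j := by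
      intro a j
      have hrow : Ustar k (K a) j = U k (K a) a * B a j := by
        rw [hB, Matrix.mul_apply]
        rw [Finset.sum_eq_single a
          (fun c _ hc => by rw [hK0 a c (Ne.symm hc), zero_mul])
          (fun h => absurd (Finset.mem_univ a) h)]
      have h0 : 0 ≤ U k (K a) a * B a j := hrow ▸ (hUstar01 k (K a) j).1
      nlinarith [hKpos a]
    obtain ⟨K', hK'inj, hK'0, hK'pos⟩ := hUstarsep k
    have hB'nn : ∀ a j, 0 ≤ B' a j := by
      intro a j
      have hrow : U k (K' a) j = Ustar k (K' a) a * B' a j := by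
        rw [hB', Matrix.mul_apply]
        rw [Finset.sum_eq_single a
          (fun c _ hc => by rw [hK'0 a c (Ne.symm hc), zero_mul])
          (fun h => absurd (Finset.mem_univ a) h)]
      have h0 : 0 ≤ Ustar k (K' a) a * B' a j := hrow ▸ (hU01 k (K' a) j).1
      nlinarith [hK'pos a]
    -- column sums of B are 1
    have hcolB : ∀ j, ∑ a, B a j = 1 := by
      intro j
      have h1 : ∑ i, Ustar k i j = ∑ a, B a j := by
        calc ∑ i, Ustar k i j = ∑ i, ∑ a, U k i a * B a j := by
              refine Finset.sum_congr rfl fun i _ => ?_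
              rw [hB, Matrix.mul_apply]
          _ = ∑ a, ∑ i, U k i a * B a j := Finset.sum_comm
          _ = ∑ a, B a j := by
              refine Finset.sum_congr rfl fun a _ => ?_
              rw [← Finset.sum_mul, hUnorm k a, one_mul]
      rw [← h1]
      exact hUstarnorm k j
    obtain ⟨σk, hσk⟩ := perm_of_nonneg_inv B B' hBnn hB'nn hBB' hB'B hcolB
    exact ⟨σk, by rw [hB, hσk]⟩
  choose σ hσ using key
  refine ⟨σ, hσ, ?_⟩
  have hUstareq : Ustar = fun k => U k * (σ k).permMatrix ℝ := funext hσ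
  have h1 : tucker U G = tucker U (tucker (fun k => (σ k).permMatrix ℝ) Gstar) := by
    rw [heq, hUstareq, tucker_tucker]
  have h2 : G = tucker (fun k => (σ k).permMatrix ℝ) Gstar := by
    have hTL := congrArg (tucker L) h1
    rw [tucker_tucker, tucker_tucker] at hTL
    have hLU : (fun k => L k * U k) = fun k => (1 : Matrix (Fin (r k)) (Fin (r k)) ℝ) :=
      funext fun k => hL k
    rw [hLU, tucker_one, tucker_one] at hTL
    exact hTL
  rw [h2, tucker_tucker]
  have hPtP : (fun k => ((σ k).permMatrix ℝ)ᵀ * (σ k).permMatrix ℝ)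
      = fun k => (1 : Matrix (Fin (r k)) (Fin (r k)) ℝ) :=
    funext fun k => permMatrix_transpose_mul (σ k)
  rw [hPtP, tucker_one]
end
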